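/- arXiv:1306.0409 — 6 statements merged into one kernel-verified Lean document; each statement's English description precedes it below -/
import Mathlib

section
/- Let T be a 2×2 unitary matrix with overlap c = max_{k,l=1,2} |T_{lk}| and γ = arccos c. Then for every unit vector ψ ∈ ℂ² and all Rényi indices α, β ≥ 0, the sum H_α(|ψ|²) + H_β(|Tψ|²) is bounded below by min_{θ ∈ [0,γ]} [ H_α((cos²θ, sin²θ)) + H_β((cos²(γ−θ), sin²(γ−θ))) ]. -/
open Real

/-- Power with the convention `0 ^ λ = 0` for all `λ ≥ 0`. -/
noncomputable def pw (p lam : ℝ) : ℝ := if p = 0 then 0 else p ^ lam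

/-- Rényi entropy of the two-point probability vector `(p₁, p₂)`:
`H_λ(p) = (1/(1-λ)) log (p₁^λ + p₂^λ)` for `λ ≠ 1`, Shannon entropy for `λ = 1`. -/
noncomputable def Hren (lam p1 p2 : ℝ) : ℝ :=
  if lam = 1 then -(p1 * Real.log p1 + p2 * Real.log p2)
  else (1 - lam)⁻¹ * Real.log (pw p1 lam + pw p2 lam)

/-- `g(θ) = H_α((cos²θ, sin²θ)) + H_β((cos²(γ−θ), sin²(γ−θ)))`. -/
noncomputable def gfun (α β γ θ : ℝ) : ℝ :=
  Hren α (Real.cos θ ^ 2) (Real.sin θ ^ 2) +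
    Hren β (Real.cos (γ - θ) ^ 2) (Real.sin (γ - θ) ^ 2)

lemma pw_nonneg {p : ℝ} (hp : 0 ≤ p) (lam : ℝ) : 0 ≤ pw p lam := by
  unfold pw; split
  · exact le_rfl
  · exact Real.rpow_nonneg hp lam

lemma pw_eq_rpow {p : ℝ} {lam : ℝ} (hlam : lam ≠ 0) : pw p lam = p ^ lam := by
  unfold pw; split
  · rename_i h; rw [h, Real.zero_rpow hlam]
  · rfl

lemma Hren_comm (lam p q : ℝ) : Hren lam p q = Hren lam q p := by
  unfold Hren; split <;> ring_nf

lemma Hren_nonneg {lam p1 p2 : ℝ} (hlam : 0 ≤ lam) (h1 : 0 ≤ p1) (h2 : 0 ≤ p2)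
    (hsum : p1 + p2 = 1) : 0 ≤ Hren lam p1 p2 := by
  have hp1le : p1 ≤ 1 := by linarith
  have hp2le : p2 ≤ 1 := by linarith
  unfold Hren
  split
  · rename_i h
    have h1' : p1 * Real.log p1 ≤ 0 :=
      mul_nonpos_of_nonneg_of_nonpos h1 (Real.log_nonpos h1 hp1le)
    have h2' : p2 * Real.log p2 ≤ 0 :=
      mul_nonpos_of_nonneg_of_nonpos h2 (Real.log_nonpos h2 hp2le)
    linarith
  · rename_i hne
    rcases lt_or_gt_of_ne hne with hlt | hgt
    · have key : ∀ p : ℝ, 0 ≤ p → p ≤ 1 → p ≤ pw p lam := by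
        intro p hp hple
        unfold pw; split
        · rename_i h; simp [h]
        · rename_i h
          have hp0 : 0 < p := lt_of_le_of_ne hp (Ne.symm h)
          calc p = p ^ (1:ℝ) := (Real.rpow_one p).symm
          _ ≤ p ^ lam := Real.rpow_le_rpow_of_exponent_ge hp0 hple hlt.le
      have : (1:ℝ) ≤ pw p1 lam + pw p2 lam := by
        have := key p1 h1 hp1le; have := key p2 h2 hp2le; linarith
      have hlog : 0 ≤ Real.log (pw p1 lam + pw p2 lam) := Real.log_nonneg this
      have hinv : 0 ≤ (1 - lam)⁻¹ := by
        apply inv_nonneg.2; linarith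
      exact mul_nonneg hinv hlog
    · have key : ∀ p : ℝ, 0 ≤ p → p ≤ 1 → pw p lam ≤ p := by
        intro p hp hple
        unfold pw; split
        · rename_i h; simp [h]
        · rename_i h
          have hp0 : 0 < p := lt_of_le_of_ne hp (Ne.symm h)
          calc p ^ lam ≤ p ^ (1:ℝ) := Real.rpow_le_rpow_of_exponent_ge hp0 hple hgt.le
          _ = p := Real.rpow_one p
      have hsum' : pw p1 lam + pw p2 lam ≤ 1 := by
        have := key p1 h1 hp1le; have := key p2 h2 hp2le; linarith
      have hlog : Real.log (pw p1 lam + pw p2 lam) ≤ 0 := Real.log_nonpos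
        (by have := pw_nonneg h1 lam; have := pw_nonneg h2 lam; linarith) hsum'
      have hinv : (1 - lam)⁻¹ ≤ 0 := inv_nonpos.2 (by linarith)
      nlinarith [mul_nonneg (neg_nonneg.2 hinv) (neg_nonneg.2 hlog)]

lemma fderiv_aux {lam : ℝ} (hlam : 0 < lam) {x : ℝ} (hx : x ∈ Set.Ioo (1/2 : ℝ) 1) :
    HasDerivAt (fun t : ℝ => t ^ lam + (1-t) ^ lam)
      (lam * x ^ (lam - 1) + -1 * lam * (1-x) ^ (lam - 1)) x := by
  obtain ⟨hx1, hx2⟩ := hx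
  have h1 : HasDerivAt (fun t : ℝ => t ^ lam) (lam * x ^ (lam - 1)) x :=
    Real.hasDerivAt_rpow_const (Or.inl (by linarith))
  have h0 : HasDerivAt (fun t : ℝ => 1 - t) (-1) x := by
    simpa using (hasDerivAt_id x).const_sub 1
  have h2 : HasDerivAt (fun t : ℝ => (1-t) ^ lam) (-1 * lam * (1-x) ^ (lam - 1)) x :=
    h0.rpow_const (Or.inl (sub_ne_zero.mpr (by intro h; linarith)))
  exact h1.add h2

lemma fmono_lt {lam : ℝ} (hlam : 0 < lam) (h1 : lam < 1) :
    AntitoneOn (fun t : ℝ => t ^ lam + (1-t) ^ lam) (Set.Icc (1/2) 1) := by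
  have hcont : ContinuousOn (fun t : ℝ => t ^ lam + (1-t) ^ lam) (Set.Icc (1/2) 1) := by
    apply ContinuousOn.add
    · exact (Real.continuous_rpow_const hlam.le).continuousOn
    · exact ((Real.continuous_rpow_const hlam.le).comp (by continuity)).continuousOn
  apply antitoneOn_of_deriv_nonpos (convex_Icc _ _) hcont
  · intro x hx
    rw [interior_Icc] at hx
    exact (fderiv_aux hlam hx).differentiableAt.differentiableWithinAt
  · intro x hx
    rw [interior_Icc] at hx
    rw [(fderiv_aux hlam hx).deriv]
    obtain ⟨hx1, hx2⟩ := hx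
    have hb : x ^ (lam-1) ≤ (1-x) ^ (lam-1) :=
      Real.rpow_le_rpow_of_nonpos (by linarith) (by linarith) (by linarith)
    nlinarith

lemma fmono_gt {lam : ℝ} (h1 : 1 < lam) :
    MonotoneOn (fun t : ℝ => t ^ lam + (1-t) ^ lam) (Set.Icc (1/2) 1) := by
  have hlam : (0:ℝ) < lam := by linarith
  have hcont : ContinuousOn (fun t : ℝ => t ^ lam + (1-t) ^ lam) (Set.Icc (1/2) 1) := by
    apply ContinuousOn.add
    · exact (Real.continuous_rpow_const hlam.le).continuousOn
    · exact ((Real.continuous_rpow_const hlam.le).comp (by continuity)).continuousOn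
  apply monotoneOn_of_deriv_nonneg (convex_Icc _ _) hcont
  · intro x hx
    rw [interior_Icc] at hx
    exact (fderiv_aux hlam hx).differentiableAt.differentiableWithinAt
  · intro x hx
    rw [interior_Icc] at hx
    rw [(fderiv_aux hlam hx).deriv]
    obtain ⟨hx1, hx2⟩ := hx
    have hb : (1-x) ^ (lam-1) ≤ x ^ (lam-1) :=
      Real.rpow_le_rpow (by linarith) (by linarith) (by linarith)
    nlinarith

lemma Hren_anti {lam : ℝ} (hlam : 0 ≤ lam) {p q : ℝ}
    (hp : 1/2 ≤ p) (hpq : p ≤ q) (hq : q ≤ 1) :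
    Hren lam q (1-q) ≤ Hren lam p (1-p) := by
  have hp0 : (0:ℝ) < p := by linarith
  have hq0 : (0:ℝ) < q := by linarith
  rcases eq_or_ne lam 1 with h1 | h1
  · subst h1
    have hb : ∀ t : ℝ, Real.binEntropy t = -(t * Real.log t + (1-t) * Real.log (1-t)) := by
      intro t
      rw [Real.binEntropy, Real.log_inv, Real.log_inv]; ring
    have key : Real.binEntropy q ≤ Real.binEntropy p := by
      rcases eq_or_lt_of_le hpq with h | h
      · rw [h]
      · exact (Real.binEntropy_strictAntiOn (by constructor <;> [norm_num; skip] <;> linarith)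
          (by constructor <;> [norm_num; skip] <;> linarith) h).le
    simp only [Hren, if_pos rfl]
    rw [← hb, ← hb]; exact key
  rcases eq_or_ne lam 0 with h0 | h0
  · subst h0
    simp only [Hren, if_neg h1]
    have e : ∀ t : ℝ, 0 < t → t ≤ 1 →
        pw t 0 + pw (1-t) 0 = if t = 1 then 1 else 2 := by
      intro t ht ht1
      unfold pw
      rcases eq_or_lt_of_le ht1 with h | h
      · simp [h.symm, ht.ne']
      · rw [if_neg ht.ne', if_neg (by intro hh; exact absurd (by linarith : t = 1) (ne_of_lt h)),
          if_neg (ne_of_lt h), Real.rpow_zero, Real.rpow_zero]; norm_num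
    rw [e p hp0 (by linarith), e q hq0 hq]
    rcases eq_or_lt_of_le hq with hq1 | hq1
    · rw [if_pos hq1]
      have : (0:ℝ) ≤ (1-0:ℝ)⁻¹ * Real.log (if p = 1 then 1 else 2) := by
        split <;> simp [Real.log_nonneg, (by norm_num : (1:ℝ) ≤ 2)]
      simpa using this
    · rw [if_neg (ne_of_lt hq1), if_neg (by intro hh; linarith)]
  · have hl0 : 0 < lam := lt_of_le_of_ne hlam (Ne.symm h0)
    simp only [Hren, if_neg h1]
    rw [pw_eq_rpow h0, pw_eq_rpow h0, pw_eq_rpow h0, pw_eq_rpow h0]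
    have hppos : (0:ℝ) < p ^ lam + (1-p) ^ lam := by
      have := Real.rpow_pos_of_pos hp0 lam
      have := Real.rpow_nonneg (by linarith : (0:ℝ) ≤ 1-p) lam
      linarith
    have hqpos : (0:ℝ) < q ^ lam + (1-q) ^ lam := by
      have := Real.rpow_pos_of_pos hq0 lam
      have := Real.rpow_nonneg (by linarith : (0:ℝ) ≤ 1-q) lam
      linarith
    rcases lt_or_gt_of_ne h1 with hlt | hgt
    · have hf := fmono_lt hl0 hlt ⟨hp, by linarith⟩ ⟨by linarith, hq⟩ hpq
      have hlog := Real.log_le_log hqpos hf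
      have hinv : (0:ℝ) ≤ (1-lam)⁻¹ := inv_nonneg.2 (by linarith)
      exact mul_le_mul_of_nonneg_left hlog hinv
    · have hf := fmono_gt hgt ⟨hp, by linarith⟩ ⟨by linarith, hq⟩ hpq
      have hlog := Real.log_le_log hppos hf
      have hinv : (1-lam)⁻¹ ≤ 0 := inv_nonpos.2 (by linarith)
      exact mul_le_mul_of_nonpos_left hlog hinv

lemma keyS {x y a b c s : ℝ} (hx : 0 ≤ x) (hy : 0 ≤ y) (hb : 0 ≤ b) (hs : 0 ≤ s)
    (hxy : x^2 + y^2 = 1) (hab : a^2 + b^2 = 1) (hcs : c^2 + s^2 = 1)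
    (hba : b ≤ a) (hxc : x ≤ c) (hca : c ≤ a) :
    x*a + y*b ≤ c*a + s*b := by
  have ha : 0 ≤ a := by linarith
  have hc : 0 ≤ c := le_trans hx hxc
  have hx2c2 : x^2 ≤ c^2 := by nlinarith
  have hc2a2 : c^2 ≤ a^2 := by nlinarith
  have ha2le1 : a^2 ≤ 1 := by nlinarith
  have hay : b*c ≤ a*y := by
    have h2 : (b*c)^2 ≤ (a*y)^2 := by
      nlinarith [mul_le_mul_of_nonneg_left hx2c2 (sq_nonneg a)]
    have := Real.sqrt_le_sqrt h2
    rwa [Real.sqrt_sq (by positivity), Real.sqrt_sq (by positivity)] at this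
  have has : b*x ≤ a*s := by
    have h2 : (b*x)^2 ≤ (a*s)^2 := by
      nlinarith [mul_le_mul_of_nonneg_left ha2le1 (by linarith : (0:ℝ) ≤ c^2 - x^2)]
    have := Real.sqrt_le_sqrt h2
    rwa [Real.sqrt_sq (by positivity), Real.sqrt_sq (by positivity)] at this
  have hkey : 0 ≤ (c-x)*((a*y - b*c) + (a*s - b*x)) :=
    mul_nonneg (by linarith) (by linarith)
  rcases eq_or_lt_of_le (by positivity : (0:ℝ) ≤ y + s) with hys | hys
  · have hy0 : y = 0 := by linarith
    have hs0 : s = 0 := by linarith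
    nlinarith
  · nlinarith [hkey]

lemma keyrow {x y a b c s : ℝ} (hx : 0 ≤ x) (hy : 0 ≤ y) (ha : 0 ≤ a) (hb : 0 ≤ b)
    (hs : 0 ≤ s) (hxy : x^2 + y^2 = 1) (hab : a^2 + b^2 = 1) (hcs : c^2 + s^2 = 1)
    (hxc : x ≤ c) (hyc : y ≤ c) (hcM : c ≤ max a b) :
    x*a + y*b ≤ c * max a b + s * min a b := by
  have hre : x*a + y*b ≤ max x y * max a b + min x y * min a b := by
    rcases le_total a b with h | h <;> rcases le_total x y with h' | h' <;>
      simp [max_eq_left, max_eq_right, min_eq_left, min_eq_right, h, h'] <;> nlinarith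
  have hM : min a b ≤ max a b := min_le_max
  have hmin : (0:ℝ) ≤ min a b := le_min ha hb
  have hXY : (max x y)^2 + (min x y)^2 = 1 := by
    rcases le_total x y with h | h <;>
      simp [max_eq_left, max_eq_right, min_eq_left, min_eq_right, h] <;> linarith
  have hAB : (max a b)^2 + (min a b)^2 = 1 := by
    rcases le_total a b with h | h <;>
      simp [max_eq_left, max_eq_right, min_eq_left, min_eq_right, h] <;> linarith
  have hkk := keyS (le_trans hx (le_max_left x y)) (le_min hx hy) hmin hs hXY hAB hcs hM
    (max_le hxc hyc) hcM
  linarith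

lemma row_norm (T : Matrix (Fin 2) (Fin 2) ℂ)
    (hT : T ∈ Matrix.unitaryGroup (Fin 2) ℂ) (l : Fin 2) :
    ‖T l 0‖ ^ 2 + ‖T l 1‖ ^ 2 = 1 := by
  have h := Matrix.mem_unitaryGroup_iff.mp hT
  have h00 : (T * star T) l l = 1 := by rw [h]; simp [Matrix.one_apply]
  simp only [Matrix.mul_apply, Fin.sum_univ_two, Matrix.star_apply] at h00
  have : (↑(‖T l 0‖ ^ 2) + ↑(‖T l 1‖ ^ 2) : ℂ) = 1 := by
    rw [Complex.sq_norm, Complex.sq_norm]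
    rw [← Complex.mul_conj, ← Complex.mul_conj]
    exact h00
  exact_mod_cast this

lemma mulVec_norm (T : Matrix (Fin 2) (Fin 2) ℂ)
    (hT : T ∈ Matrix.unitaryGroup (Fin 2) ℂ) (ψ : Fin 2 → ℂ)
    (hψ : ‖ψ 0‖ ^ 2 + ‖ψ 1‖ ^ 2 = 1) :
    ‖T.mulVec ψ 0‖ ^ 2 + ‖T.mulVec ψ 1‖ ^ 2 = 1 := by
  have h := Matrix.mem_unitaryGroup_iff'.mp hT
  have e : ∀ k l : Fin 2, (starRingEnd ℂ) (T 0 k) * T 0 l + (starRingEnd ℂ) (T 1 k) * T 1 l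
      = if k = l then 1 else 0 := by
    intro k l
    have h' : (star T * T) k l = (1 : Matrix (Fin 2) (Fin 2) ℂ) k l := by rw [h]
    simpa [Matrix.mul_apply, Fin.sum_univ_two, Matrix.star_apply, Matrix.one_apply,
      mul_comm] using h'
  have hA : T.mulVec ψ 0 = T 0 0 * ψ 0 + T 0 1 * ψ 1 := by
    simp [Matrix.mulVec, dotProduct, Fin.sum_univ_two]
  have hB : T.mulVec ψ 1 = T 1 0 * ψ 0 + T 1 1 * ψ 1 := by
    simp [Matrix.mulVec, dotProduct, Fin.sum_univ_two]
  have key : T.mulVec ψ 0 * (starRingEnd ℂ) (T.mulVec ψ 0)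
      + T.mulVec ψ 1 * (starRingEnd ℂ) (T.mulVec ψ 1)
      = ψ 0 * (starRingEnd ℂ) (ψ 0) + ψ 1 * (starRingEnd ℂ) (ψ 1) := by
    rw [hA, hB]
    have e00 : (starRingEnd ℂ) (T 0 0) * T 0 0 + (starRingEnd ℂ) (T 1 0) * T 1 0 = 1 := by
      simpa using e 0 0
    have e11 : (starRingEnd ℂ) (T 0 1) * T 0 1 + (starRingEnd ℂ) (T 1 1) * T 1 1 = 1 := by
      simpa using e 1 1
    have e01 : (starRingEnd ℂ) (T 0 0) * T 0 1 + (starRingEnd ℂ) (T 1 0) * T 1 1 = 0 := by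
      simpa using e 0 1
    have e10 : (starRingEnd ℂ) (T 0 1) * T 0 0 + (starRingEnd ℂ) (T 1 1) * T 1 0 = 0 := by
      simpa using e 1 0
    simp only [map_add, map_mul]
    linear_combination (ψ 0 * (starRingEnd ℂ) (ψ 0)) * e00 + (ψ 1 * (starRingEnd ℂ) (ψ 1)) * e11
      + (ψ 1 * (starRingEnd ℂ) (ψ 0)) * e01 + (ψ 0 * (starRingEnd ℂ) (ψ 1)) * e10
  have hcx : (↑(‖T.mulVec ψ 0‖ ^ 2) + ↑(‖T.mulVec ψ 1‖ ^ 2) : ℂ)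
      = ↑(‖ψ 0‖ ^ 2) + ↑(‖ψ 1‖ ^ 2) := by
    simp only [Complex.sq_norm, ← Complex.mul_conj]
    exact key
  have hre : (‖T.mulVec ψ 0‖ ^ 2 + ‖T.mulVec ψ 1‖ ^ 2 : ℝ)
      = ‖ψ 0‖ ^ 2 + ‖ψ 1‖ ^ 2 := by exact_mod_cast hcx
  rw [hre, hψ]

lemma le_one_of_sq_le_one {x : ℝ} (hx : 0 ≤ x) (h : x^2 ≤ 1) : x ≤ 1 := by nlinarith

set_option maxHeartbeats 1000000 in
/-- tight lower bound (Proposition 1, inequality part) for the sum of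
Rényi entropies of a qubit state in two bases related by a unitary `T`. -/
theorem stmt_0 (T : Matrix (Fin 2) (Fin 2) ℂ)
    (hT : T ∈ Matrix.unitaryGroup (Fin 2) ℂ)
    (c γ : ℝ)
    (hc : IsGreatest {x : ℝ | ∃ k l : Fin 2, x = ‖T l k‖} c)
    (hγ : γ = Real.arccos c)
    (α β : ℝ) (hα : 0 ≤ α) (hβ : 0 ≤ β)
    (ψ : Fin 2 → ℂ)
    (hψ : ‖ψ 0‖ ^ 2 + ‖ψ 1‖ ^ 2 = 1) :
    sInf ((fun θ : ℝ => gfun α β γ θ) '' Set.Icc 0 γ) ≤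
      Hren α (‖ψ 0‖ ^ 2) (‖ψ 1‖ ^ 2) +
        Hren β (‖T.mulVec ψ 0‖ ^ 2) (‖T.mulVec ψ 1‖ ^ 2) := by
  have hrow := row_norm T hT
  have huv := mulVec_norm T hT ψ hψ
  set a := ‖ψ 0‖ with ha_def
  set b := ‖ψ 1‖ with hb_def
  set u := ‖T.mulVec ψ 0‖ with hu_def
  set v := ‖T.mulVec ψ 1‖ with hv_def
  have ha : 0 ≤ a := norm_nonneg _
  have hb : 0 ≤ b := norm_nonneg _
  have hu : 0 ≤ u := norm_nonneg _
  have hv : 0 ≤ v := norm_nonneg _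
  obtain ⟨⟨k0, l0, hc0⟩, hub⟩ := hc
  have hentry : ∀ k l : Fin 2, ‖T l k‖ ≤ c := fun k l => hub ⟨k, l, rfl⟩
  have hc0' : 0 ≤ c := hc0 ▸ norm_nonneg _
  have hcsq : c^2 ≤ 1 := by
    have hr := hrow l0
    fin_cases k0
    · rw [show c = ‖T l0 0‖ from hc0]
      linarith [sq_nonneg (‖T l0 1‖)]
    · rw [show c = ‖T l0 1‖ from hc0]
      linarith [sq_nonneg (‖T l0 0‖)]
  have hc1 : c ≤ 1 := le_one_of_sq_le_one hc0' hcsq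
  set s := Real.sqrt (1 - c^2) with hs_def
  have hs0 : 0 ≤ s := Real.sqrt_nonneg _
  have hcs : c^2 + s^2 = 1 := by
    rw [hs_def, Real.sq_sqrt (by linarith)]; ring
  have hγ0 : 0 ≤ γ := hγ ▸ Real.arccos_nonneg c
  have hγpi : γ ≤ π := hγ ▸ Real.arccos_le_pi c
  have hcosγ : Real.cos γ = c := hγ ▸ Real.cos_arccos (by linarith) hc1
  have hsinγ : Real.sin γ = s := by rw [hγ, Real.sin_arccos]
  have hM1m1 : (max a b)^2 + (min a b)^2 = 1 := by
    rcases le_total a b with h | h <;>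
      simp [max_eq_left, max_eq_right, min_eq_left, min_eq_right, h] <;> linarith
  have hM1half : 1/2 ≤ (max a b)^2 := by
    have h1 := pow_le_pow_left₀ ha (le_max_left a b) 2
    have h2 := pow_le_pow_left₀ hb (le_max_right a b) 2
    linarith
  have hm10 : 0 ≤ min a b := le_min ha hb
  have hM10 : 0 ≤ max a b := ha.trans (le_max_left a b)
  have hM11 : max a b ≤ 1 :=
    le_one_of_sq_le_one hM10 (by linarith [sq_nonneg (min a b)])
  have hM2m2 : (max u v)^2 + (min u v)^2 = 1 := by
    rcases le_total u v with h | h <;>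
      simp [max_eq_left, max_eq_right, min_eq_left, min_eq_right, h] <;> linarith
  have hM2half : 1/2 ≤ (max u v)^2 := by
    have h1 := pow_le_pow_left₀ hu (le_max_left u v) 2
    have h2 := pow_le_pow_left₀ hv (le_max_right u v) 2
    linarith
  have hm20 : 0 ≤ min u v := le_min hu hv
  have hM20 : 0 ≤ max u v := hu.trans (le_max_left u v)
  have hM21 : max u v ≤ 1 :=
    le_one_of_sq_le_one hM20 (by linarith [sq_nonneg (min u v)])
  set θ1 := Real.arccos (max a b) with hθ1_def
  have hcosθ1 : Real.cos θ1 = max a b := Real.cos_arccos (by linarith) hM11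
  have hθ10 : 0 ≤ θ1 := Real.arccos_nonneg _
  have hθ1pi : θ1 ≤ π := Real.arccos_le_pi _
  set θ := min θ1 γ with hθ_def
  have hθ0 : 0 ≤ θ := le_min hθ10 hγ0
  have hθγ : θ ≤ γ := min_le_right _ _
  have hcosθ : max a b ≤ Real.cos θ := by
    have := Real.cos_le_cos_of_nonneg_of_le_pi hθ0 hθ1pi (min_le_left θ1 γ)
    rwa [hcosθ1] at this
  have hkey : max u v ≤ Real.cos (γ - θ) := by
    rcases le_total γ θ1 with hle | hle
    · rw [show θ = γ from min_eq_right hle, sub_self, Real.cos_zero]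
      exact hM21
    · have hθθ1 : θ = θ1 := min_eq_left hle
      have hcM1 : c ≤ max a b := by
        rw [← hcosγ, ← hcosθ1]
        exact Real.cos_le_cos_of_nonneg_of_le_pi hθ10 hγpi hle
      have hm1eq : Real.sqrt (1 - (max a b)^2) = min a b := by
        rw [show (1:ℝ) - (max a b)^2 = (min a b)^2 by linarith, Real.sqrt_sq hm10]
      have hbound : ∀ l : Fin 2, ‖T.mulVec ψ l‖
          ≤ c * max a b + s * min a b := by
        intro l
        have hAl : T.mulVec ψ l = T l 0 * ψ 0 + T l 1 * ψ 1 := by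
          simp [Matrix.mulVec, dotProduct, Fin.sum_univ_two]
        have htri : ‖T.mulVec ψ l‖
            ≤ ‖T l 0‖ * a + ‖T l 1‖ * b := by
          rw [hAl]
          calc ‖T l 0 * ψ 0 + T l 1 * ψ 1‖
              ≤ ‖T l 0 * ψ 0‖ + ‖T l 1 * ψ 1‖ :=
                norm_add_le _ _
            _ = ‖T l 0‖ * a + ‖T l 1‖ * b := by
                rw [norm_mul, norm_mul]
        exact htri.trans (keyrow (norm_nonneg _) (norm_nonneg _) ha hb hs0
          (hrow l) hψ hcs (hentry 0 l) (hentry 1 l) hcM1)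
      rw [hθθ1, Real.cos_sub, hcosγ, hcosθ1, hsinγ, hθ1_def, Real.sin_arccos, hm1eq]
      exact max_le (hbound 0) (hbound 1)
  have hstepA : Hren α (Real.cos θ ^ 2) (Real.sin θ ^ 2) ≤ Hren α (a^2) (b^2) := by
    have hq : (max a b)^2 ≤ Real.cos θ ^ 2 := pow_le_pow_left₀ hM10 hcosθ 2
    have hq1 : Real.cos θ ^ 2 ≤ 1 := by
      linarith [Real.sin_sq_add_cos_sq θ, sq_nonneg (Real.sin θ)]
    have hmain := Hren_anti hα hM1half hq hq1
    rw [Real.sin_sq]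
    refine hmain.trans (le_of_eq ?_)
    rcases le_total a b with h | h
    · rw [max_eq_right h, show (1:ℝ) - b^2 = a^2 by linarith, Hren_comm]
    · rw [max_eq_left h, show (1:ℝ) - a^2 = b^2 by linarith]
  have hstepB : Hren β (Real.cos (γ - θ) ^ 2) (Real.sin (γ - θ) ^ 2)
      ≤ Hren β (u^2) (v^2) := by
    have hq : (max u v)^2 ≤ Real.cos (γ - θ) ^ 2 := pow_le_pow_left₀ hM20 hkey 2
    have hq1 : Real.cos (γ - θ) ^ 2 ≤ 1 := by
      linarith [Real.sin_sq_add_cos_sq (γ - θ), sq_nonneg (Real.sin (γ - θ))]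
    have hmain := Hren_anti hβ hM2half hq hq1
    rw [Real.sin_sq]
    refine hmain.trans (le_of_eq ?_)
    rcases le_total u v with h | h
    · rw [max_eq_right h, show (1:ℝ) - v^2 = u^2 by linarith, Hren_comm]
    · rw [max_eq_left h, show (1:ℝ) - u^2 = v^2 by linarith]
  have hbdd : BddBelow ((fun θ : ℝ => gfun α β γ θ) '' Set.Icc 0 γ) := by
    refine ⟨0, ?_⟩
    rintro y ⟨t, _, rfl⟩
    exact add_nonneg
      (Hren_nonneg hα (sq_nonneg _) (sq_nonneg _)
        (by rw [add_comm]; exact Real.sin_sq_add_cos_sq t))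
      (Hren_nonneg hβ (sq_nonneg _) (sq_nonneg _)
        (by rw [add_comm]; exact Real.sin_sq_add_cos_sq (γ - t)))
  refine le_trans (csInf_le hbdd ⟨θ, ⟨hθ0, hθγ⟩, rfl⟩) ?_
  unfold gfun
  exact add_le_add hstepA hstepB
end

section
/- Let T = Φ(u) V(γ_T) Φ(v) be a 2×2 unitary matrix, where Φ(x) = diag(e^{ix₁}, e^{ix₂}) for x ∈ ℝ², V(γ_T) = [[cos γ_T, sin γ_T], [−sin γ_T, cos γ_T]], γ_T ∈ [0, π/2], and u, v ∈ ℝ². Set γ = min(γ_T, π/2 − γ_T) (so that cos γ = c, the overlap of T). Let α, β ≥ 0 and let θ₀ ∈ [0, γ] be any point attaining the minimum of θ ↦ H_α((cos²θ, sin²θ)) + H_β((cos²(γ−θ), sin²(γ−θ))) over [0, γ]. Put ε = 1 if γ_T ≤ π/4 and ε = −1 if γ_T > π/4. Then for every φ ∈ [0, 2π) and every n ∈ {0, 1}, the unit vector ψ = e^{iφ} Φ(−v) · (cos(ε θ₀ + nπ/2), sin(ε θ₀ + nπ/2))ᵗ satisfies H_α(|ψ|²) + H_β(|Tψ|²) =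 min_{θ ∈ [0,γ]} [ H_α((cos²θ, sin²θ)) + H_β((cos²(γ−θ), sin²(γ−θ))) ]. -/
open Real

/-- `Φ(x) = diag(e^{i x₁}, e^{i x₂})`. -/
noncomputable def PhiM (x : Fin 2 → ℝ) : Matrix (Fin 2) (Fin 2) ℂ :=
  Matrix.diagonal fun k => Complex.exp (Complex.I * (x k : ℂ))

/-- `V(γ) = [[cos γ, sin γ], [−sin γ, cos γ]]`. -/
noncomputable def Vrot (g : ℝ) : Matrix (Fin 2) (Fin 2) ℂ :=
  !![(Real.cos g : ℂ), (Real.sin g : ℂ); (-Real.sin g : ℂ), (Real.cos g : ℂ)]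

lemma hsin_of_hcos {a b : ℝ} (h : Real.cos a ^ 2 = Real.cos b ^ 2) :
    Real.sin a ^ 2 = Real.sin b ^ 2 := by
  have := Real.sin_sq_add_cos_sq a
  have := Real.sin_sq_add_cos_sq b
  linarith

lemma Hsame (lam a b : ℝ) (h : Real.cos a ^ 2 = Real.cos b ^ 2) :
    Hren lam (Real.cos a ^ 2) (Real.sin a ^ 2) = Hren lam (Real.cos b ^ 2) (Real.sin b ^ 2) := by
  rw [h, hsin_of_hcos h]

lemma Hswap (lam a b : ℝ) (h : Real.cos a ^ 2 = Real.sin b ^ 2) :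
    Hren lam (Real.cos a ^ 2) (Real.sin a ^ 2) = Hren lam (Real.cos b ^ 2) (Real.sin b ^ 2) := by
  have h2 : Real.sin a ^ 2 = Real.cos b ^ 2 := by
    have := Real.sin_sq_add_cos_sq a
    have := Real.sin_sq_add_cos_sq b
    linarith
  rw [h, h2, Hren_comm]

lemma cs1 (a : ℝ) : Real.cos (a + Real.pi / 2) ^ 2 = Real.sin a ^ 2 := by
  rw [Real.cos_add]; simp

lemma cs2 (a : ℝ) : Real.cos (a - Real.pi / 2) ^ 2 = Real.sin a ^ 2 := by
  rw [Real.cos_sub]; simp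

lemma cs3 (a : ℝ) : Real.cos (Real.pi / 2 - a) ^ 2 = Real.sin a ^ 2 := by
  rw [Real.cos_pi_div_two_sub]

lemma abs_sq_key (u v : Fin 2 → ℝ) (γT : ℝ)
    (T : Matrix (Fin 2) (Fin 2) ℂ)
    (hTdec : T = PhiM u * Vrot γT * PhiM v)
    (φ : ℝ) (x : ℝ)
    (ψ : Fin 2 → ℂ)
    (hψ : ψ = fun k =>
      Complex.exp (Complex.I * (φ : ℂ)) *
        (PhiM (-v)).mulVec
          ![(Real.cos x : ℂ), (Real.sin x : ℂ)] k) :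
    ‖ψ 0‖ ^ 2 = Real.cos x ^ 2 ∧
    ‖ψ 1‖ ^ 2 = Real.sin x ^ 2 ∧
    ‖T.mulVec ψ 0‖ ^ 2 = Real.cos (γT - x) ^ 2 ∧
    ‖T.mulVec ψ 1‖ ^ 2 = Real.sin (γT - x) ^ 2 := by
  have hTψ : T.mulVec ψ = fun k =>
      Complex.exp (Complex.I * (φ : ℂ)) * Complex.exp (Complex.I * (u k : ℂ)) *
        (Vrot γT).mulVec ![(Real.cos x : ℂ), (Real.sin x : ℂ)] k := by
    subst hψ hTdec
    funext k
    rw [← Matrix.mulVec_mulVec, ← Matrix.mulVec_mulVec]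
    have h1 : ((PhiM v).mulVec fun k =>
        Complex.exp (Complex.I * (φ : ℂ)) *
          (PhiM (-v)).mulVec ![(Real.cos x : ℂ), (Real.sin x : ℂ)] k)
        = fun k => Complex.exp (Complex.I * (φ : ℂ)) * ![(Real.cos x : ℂ), (Real.sin x : ℂ)] k := by
      funext k
      have h : Complex.exp (Complex.I * (v k : ℂ)) * Complex.exp (-(Complex.I * (v k : ℂ))) = 1 := by
        rw [← Complex.exp_add]; simp
      simp only [PhiM, Matrix.mulVec_diagonal, Pi.neg_apply, Complex.ofReal_neg, mul_neg]
      linear_combination (Complex.exp (Complex.I * (φ:ℂ)) * ![(Real.cos x : ℂ), (Real.sin x : ℂ)] k) * h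
    rw [h1]
    have h2 : ((Vrot γT).mulVec fun k => Complex.exp (Complex.I * (φ : ℂ)) * ![(Real.cos x : ℂ), (Real.sin x : ℂ)] k)
        = fun k => Complex.exp (Complex.I * (φ : ℂ)) * (Vrot γT).mulVec ![(Real.cos x : ℂ), (Real.sin x : ℂ)] k := by
      funext k
      fin_cases k <;> simp [Vrot, Matrix.mulVec, dotProduct, Fin.sum_univ_two] <;> ring
    rw [h2]
    simp only [PhiM, Matrix.mulVec_diagonal]
    ring
  have hV0 : (Vrot γT).mulVec ![(Real.cos x : ℂ), (Real.sin x : ℂ)] 0 = ((Real.cos (γT - x) : ℝ) : ℂ) := by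
    simp [Vrot, Matrix.mulVec, dotProduct, Fin.sum_univ_two, Real.cos_sub]
    try (push_cast; ring)
  have hV1 : (Vrot γT).mulVec ![(Real.cos x : ℂ), (Real.sin x : ℂ)] 1 = ((-Real.sin (γT - x) : ℝ) : ℂ) := by
    simp [Vrot, Matrix.mulVec, dotProduct, Fin.sum_univ_two, Real.sin_sub]
    try (push_cast; ring)
  refine ⟨?_, ?_, ?_, ?_⟩
  · subst hψ
    simp only [PhiM, Matrix.mulVec_diagonal, norm_mul, Complex.norm_exp]
    simp only [Matrix.cons_val_zero]
    simp [Complex.norm_real, Complex.mul_re]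
    rw [← Complex.ofReal_cos, Complex.norm_real, Real.norm_eq_abs, sq_abs]
  · subst hψ
    simp only [PhiM, Matrix.mulVec_diagonal, norm_mul, Complex.norm_exp]
    simp only [Matrix.cons_val_one, Matrix.head_cons]
    simp [Complex.norm_real, Complex.mul_re]
    rw [← Complex.ofReal_sin, Complex.norm_real, Real.norm_eq_abs, sq_abs]
  · rw [hTψ]
    simp only [hV0, norm_mul, Complex.norm_exp, Complex.norm_real]
    simp [Complex.mul_re, sq_abs]
  · rw [hTψ]
    simp only [hV1, norm_mul, Complex.norm_exp, Complex.norm_real]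
    simp [Complex.mul_re, sq_abs]

/-- explicit minimizing states (Proposition 2). -/
theorem stmt_2 (u v : Fin 2 → ℝ) (γT : ℝ)
    (hγT : γT ∈ Set.Icc 0 (Real.pi / 2))
    (T : Matrix (Fin 2) (Fin 2) ℂ)
    (hTdec : T = PhiM u * Vrot γT * PhiM v)
    (γ : ℝ) (hγ : γ = min γT (Real.pi / 2 - γT))
    (α β : ℝ) (hα : 0 ≤ α) (hβ : 0 ≤ β)
    (θ₀ : ℝ) (hθ₀ : θ₀ ∈ Set.Icc 0 γ)
    (hmin : ∀ θ ∈ Set.Icc 0 γ, gfun α β γ θ₀ ≤ gfun α β γ θ)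
    (ε : ℝ) (hε : ε = if γT ≤ Real.pi / 4 then (1 : ℝ) else -1)
    (φ : ℝ) (hφ : φ ∈ Set.Ico 0 (2 * Real.pi))
    (n : ℕ) (hn : n = 0 ∨ n = 1)
    (ψ : Fin 2 → ℂ)
    (hψ : ψ = fun k =>
      Complex.exp (Complex.I * (φ : ℂ)) *
        (PhiM (-v)).mulVec
          ![(Real.cos (ε * θ₀ + n * (Real.pi / 2)) : ℂ),
            (Real.sin (ε * θ₀ + n * (Real.pi / 2)) : ℂ)] k) :
    Hren α (‖ψ 0‖ ^ 2) (‖ψ 1‖ ^ 2) +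
      Hren β (‖T.mulVec ψ 0‖ ^ 2) (‖T.mulVec ψ 1‖ ^ 2) =
      sInf ((fun θ : ℝ => gfun α β γ θ) '' Set.Icc 0 γ) := by
  obtain ⟨h0, h1, h2, h3⟩ :=
    abs_sq_key u v γT T hTdec φ (ε * θ₀ + n * (Real.pi / 2)) ψ hψ
  rw [h0, h1, h2, h3]
  have hsInf : sInf ((fun θ : ℝ => gfun α β γ θ) '' Set.Icc 0 γ) = gfun α β γ θ₀ :=
    IsLeast.csInf_eq ⟨⟨θ₀, hθ₀, rfl⟩, by rintro y ⟨θ, hθ, rfl⟩; exact hmin θ hθ⟩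
  rw [hsInf]
  unfold gfun
  rcases le_or_gt γT (Real.pi / 4) with hle | hlt
  · have hε' : ε = 1 := by rw [hε, if_pos hle]
    have hγ' : γ = γT := by rw [hγ]; exact min_eq_left (by linarith)
    rcases hn with hn | hn
    · have e1 : ε * θ₀ + (n : ℝ) * (Real.pi / 2) = θ₀ := by
        subst hn; rw [hε']; push_cast; ring
      rw [e1, hγ']
    · have e1 : ε * θ₀ + (n : ℝ) * (Real.pi / 2) = θ₀ + Real.pi / 2 := by
        subst hn; rw [hε']; push_cast; ring
      have e2 : γT - (θ₀ + Real.pi / 2) = (γ - θ₀) - Real.pi / 2 := by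
        rw [hγ']; ring
      rw [e1, e2, Hswap α _ θ₀ (cs1 θ₀), Hswap β _ (γ - θ₀) (cs2 (γ - θ₀))]
  · have hε' : ε = -1 := by rw [hε, if_neg (not_le.mpr hlt)]
    have hγ' : γ = Real.pi / 2 - γT := by rw [hγ]; exact min_eq_right (by linarith)
    rcases hn with hn | hn
    · have e1 : ε * θ₀ + (n : ℝ) * (Real.pi / 2) = -θ₀ := by
        subst hn; rw [hε']; push_cast; ring
      have e2 : γT - (-θ₀) = Real.pi / 2 - (γ - θ₀) := by
        rw [hγ']; ring
      rw [e1, e2, Hsame α (-θ₀) θ₀ (by rw [Real.cos_neg]),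
        Hswap β _ (γ - θ₀) (cs3 (γ - θ₀))]
    · have e1 : ε * θ₀ + (n : ℝ) * (Real.pi / 2) = Real.pi / 2 - θ₀ := by
        subst hn; rw [hε']; push_cast; ring
      have e2 : γT - (Real.pi / 2 - θ₀) = -(γ - θ₀) := by
        rw [hγ']; ring
      rw [e1, e2, Hswap α _ θ₀ (cs3 θ₀),
        Hsame β (-(γ - θ₀)) (γ - θ₀) (by rw [Real.cos_neg])]
end

section
/- Let γ ∈ [0, π/4], c = cos γ, and α, β ∈ [0, 1/2]. Define g(θ) = H_α((cos²θ, sin²θ)) + H_β((cos²(γ−θ), sin²(γ−θ))) for θ ∈ [0, γ]. Then the minimum of g over [0, γ] equals (1/(1−λ))·log( c^{2λ} + (1−c²)^λ ) with λ = max(α, β), and it is attained at θ = 0 when α < β, at θ = γ when α > β, and at both endpoints θ = 0 and θ = γ when α = β. -/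
open Real

lemma pw_zero' (lam : ℝ) : pw 0 lam = 0 := if_pos rfl
lemma pw_of_ne (p lam : ℝ) (h : p ≠ 0) : pw p lam = p ^ lam := if_neg h
lemma pw_one' (lam : ℝ) : pw 1 lam = 1 := by
  rw [pw_of_ne 1 lam one_ne_zero, Real.one_rpow]

lemma pw_ge_self {p lam : ℝ} (hp0 : 0 ≤ p) (hp1 : p ≤ 1) (h1 : lam ≤ 1) : p ≤ pw p lam := by
  rcases eq_or_lt_of_le hp0 with h | h
  · rw [← h, pw_zero']
  · rw [pw_of_ne p lam h.ne']
    calc p = p ^ (1 : ℝ) := (Real.rpow_one p).symm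
      _ ≤ p ^ lam := Real.rpow_le_rpow_of_exponent_ge h hp1 h1

lemma one_le_S {p lam : ℝ} (hp0 : 0 ≤ p) (hp1 : p ≤ 1) (hl : lam ≤ 1) :
    1 ≤ pw p lam + pw (1 - p) lam := by
  have h1 := pw_ge_self hp0 hp1 hl
  have h2 := pw_ge_self (by linarith : (0:ℝ) ≤ 1 - p) (by linarith) hl
  linarith

/-- Rényi entropy of a two-point distribution is nonincreasing in the index. -/
lemma renyi_mono {p a b : ℝ} (hp0 : 0 ≤ p) (hp1 : p ≤ 1)
    (ha : 0 ≤ a) (hab : a ≤ b) (hb : b ≤ 1 / 2) :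
    (1 - b)⁻¹ * Real.log (pw p b + pw (1 - p) b) ≤
      (1 - a)⁻¹ * Real.log (pw p a + pw (1 - p) a) := by
  rcases eq_or_lt_of_le hp0 with h0 | h0
  · rw [← h0]; norm_num [pw_zero', pw_one']
  rcases eq_or_lt_of_le hp1 with h1 | h1
  · rw [h1]; norm_num [pw_zero', pw_one']
  have hq0 : (0:ℝ) < 1 - p := by linarith
  rw [pw_of_ne _ _ h0.ne', pw_of_ne _ _ h0.ne', pw_of_ne _ _ hq0.ne', pw_of_ne _ _ hq0.ne']
  set q : ℝ := 1 - p with hq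
  have ha1 : (0:ℝ) < 1 - a := by linarith
  have hb1 : (0:ℝ) < 1 - b := by linarith
  set e : ℝ := (1 - a) / (1 - b) with he
  have he1 : 1 ≤ e := by rw [he, le_div_iff₀ hb1]; linarith
  have hconv : ConvexOn ℝ (Set.Ici 0) fun x : ℝ => x ^ e := convexOn_rpow he1
  have hx : p ^ (b - 1) ∈ Set.Ici (0:ℝ) := Real.rpow_nonneg h0.le _
  have hy : q ^ (b - 1) ∈ Set.Ici (0:ℝ) := Real.rpow_nonneg hq0.le _
  have hpq : p + q = 1 := by rw [hq]; ring
  have hkey := hconv.2 hx hy hp0 hq0.le hpq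
  simp only [smul_eq_mul] at hkey
  have hmul : ∀ x : ℝ, 0 < x → ∀ t : ℝ, x * x ^ (t - 1) = x ^ t := by
    intro x hx t
    nth_rewrite 1 [← Real.rpow_one x]
    rw [← Real.rpow_add hx]; norm_num
  have hbe : ∀ x : ℝ, 0 < x → (x ^ (b - 1)) ^ e = x ^ (a - 1) := by
    intro x hx
    rw [← Real.rpow_mul hx.le]
    congr 1
    rw [he]
    field_simp
    ring
  rw [hbe p h0, hbe q hq0, hmul p h0 b, hmul q hq0 b, hmul p h0 a, hmul q hq0 a] at hkey
  -- hkey : (p ^ b + q ^ b) ^ e ≤ p ^ a + q ^ a  (after rewriting p * p^(a-1) = p^a)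
  have hSb : 1 ≤ p ^ b + q ^ b := by
    have := one_le_S hp0 hp1 (by linarith : b ≤ 1)
    rwa [pw_of_ne _ _ h0.ne', pw_of_ne _ _ hq0.ne'] at this
  have hSbpos : 0 < p ^ b + q ^ b := lt_of_lt_of_le one_pos hSb
  have hlog : e * Real.log (p ^ b + q ^ b) ≤ Real.log (p ^ a + q ^ a) := by
    rw [← Real.log_rpow hSbpos]
    exact Real.log_le_log (Real.rpow_pos_of_pos hSbpos e) hkey
  have hcoef : (1 - b)⁻¹ = (1 - a)⁻¹ * e := by
    rw [he]; field_simp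
  rw [hcoef, mul_assoc]
  exact mul_le_mul_of_nonneg_left hlog (inv_nonneg.2 ha1.le)

/-- Subadditivity of `x ^ s` for `s ∈ [0,1]`, real version. -/
lemma rpow_add_le {x y s : ℝ} (hx : 0 ≤ x) (hy : 0 ≤ y) (hs : 0 ≤ s) (hs1 : s ≤ 1) :
    (x + y) ^ s ≤ x ^ s + y ^ s := by
  lift x to NNReal using hx
  lift y to NNReal using hy
  rw [← NNReal.coe_add, ← NNReal.coe_rpow, ← NNReal.coe_rpow, ← NNReal.coe_rpow,
    ← NNReal.coe_add, NNReal.coe_le_coe]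
  exact NNReal.rpow_add_le_add_rpow x y hs hs1

/-- Submultiplicativity of `θ ↦ cos^{2λ} θ + sin^{2λ} θ` for `λ ∈ [0, 1/2]`. -/
lemma S_submul {lam x y : ℝ} (hl0 : 0 ≤ lam) (hl : lam ≤ 1 / 2)
    (hx : 0 ≤ x) (hy : 0 ≤ y) (hxy : x + y ≤ Real.pi / 4) :
    pw (Real.cos (x + y) ^ 2) lam + pw (Real.sin (x + y) ^ 2) lam ≤
      (pw (Real.cos x ^ 2) lam + pw (Real.sin x ^ 2) lam) *
        (pw (Real.cos y ^ 2) lam + pw (Real.sin y ^ 2) lam) := by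
  have hpi : Real.pi / 4 < Real.pi / 2 := by
    have := Real.pi_pos; linarith
  have hSnn : ∀ t : ℝ, 0 ≤ pw (Real.cos t ^ 2) lam + pw (Real.sin t ^ 2) lam := fun t =>
    add_nonneg (pw_nonneg (sq_nonneg _) lam) (pw_nonneg (sq_nonneg _) lam)
  rcases eq_or_lt_of_le hx with h | hx0
  · rw [← h]
    simp only [zero_add, Real.cos_zero, Real.sin_zero, one_pow]
    rw [pw_one', show ((0:ℝ)^2) = 0 by ring, pw_zero', add_zero, one_mul]
  rcases eq_or_lt_of_le hy with h | hy0
  · rw [← h]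
    simp only [add_zero, Real.cos_zero, Real.sin_zero, one_pow]
    rw [pw_one', show ((0:ℝ)^2) = 0 by ring, pw_zero', add_zero, mul_one]
  -- now x, y > 0
  have hxpi : x < Real.pi / 2 := by linarith
  have hypi : y < Real.pi / 2 := by linarith
  have hA : 0 < Real.cos x := Real.cos_pos_of_mem_Ioo ⟨by linarith [Real.pi_pos], hxpi⟩
  have hC : 0 < Real.cos y := Real.cos_pos_of_mem_Ioo ⟨by linarith [Real.pi_pos], hypi⟩
  have hB : 0 < Real.sin x := Real.sin_pos_of_pos_of_lt_pi hx0 (by linarith [Real.pi_pos])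
  have hD : 0 < Real.sin y := Real.sin_pos_of_pos_of_lt_pi hy0 (by linarith [Real.pi_pos])
  have hcxy : 0 < Real.cos (x + y) :=
    Real.cos_pos_of_mem_Ioo ⟨by linarith [Real.pi_pos], by linarith⟩
  have hsxy : 0 < Real.sin (x + y) :=
    Real.sin_pos_of_pos_of_lt_pi (by linarith) (by linarith [Real.pi_pos])
  set A := Real.cos x; set B := Real.sin x; set C := Real.cos y; set D := Real.sin y
  have sq_ne : ∀ t : ℝ, 0 < t → t ^ 2 ≠ 0 := fun t ht => by positivity
  rw [pw_of_ne _ _ (sq_ne _ hcxy), pw_of_ne _ _ (sq_ne _ hsxy),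
    pw_of_ne _ _ (sq_ne _ hA), pw_of_ne _ _ (sq_ne _ hB),
    pw_of_ne _ _ (sq_ne _ hC), pw_of_ne _ _ (sq_ne _ hD)]
  have hcos_add : Real.cos (x + y) = A * C - B * D := Real.cos_add x y
  have hsin_add : Real.sin (x + y) = B * C + A * D := by
    rw [Real.sin_add]
  -- cosine term
  have hACBD : 0 ≤ A * C - B * D := by rw [← hcos_add]; exact hcxy.le
  have t1 : (Real.cos (x + y) ^ 2) ^ lam ≤ (A ^ 2) ^ lam * (C ^ 2) ^ lam := by
    rw [← Real.mul_rpow (by positivity) (by positivity)]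
    apply Real.rpow_le_rpow (by positivity) _ hl0
    rw [hcos_add]
    nlinarith [mul_pos hB hD, hACBD]
  -- sine term
  have t2 : (Real.sin (x + y) ^ 2) ^ lam ≤
      (B ^ 2) ^ lam * (C ^ 2) ^ lam + (A ^ 2) ^ lam * (D ^ 2) ^ lam := by
    have e1 : (Real.sin (x + y) ^ 2) ^ lam = (B * C + A * D) ^ (2 * lam) := by
      rw [hsin_add, ← Real.rpow_natCast (B * C + A * D) 2, ← Real.rpow_mul (by positivity)]
      norm_num
    have e2 : (B ^ 2) ^ lam * (C ^ 2) ^ lam = (B * C) ^ (2 * lam) := by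
      rw [← Real.mul_rpow (by positivity) (by positivity),
        show B ^ 2 * C ^ 2 = (B * C) ^ 2 by ring,
        ← Real.rpow_natCast (B * C) 2, ← Real.rpow_mul (by positivity)]
      norm_num
    have e3 : (A ^ 2) ^ lam * (D ^ 2) ^ lam = (A * D) ^ (2 * lam) := by
      rw [← Real.mul_rpow (by positivity) (by positivity),
        show A ^ 2 * D ^ 2 = (A * D) ^ 2 by ring,
        ← Real.rpow_natCast (A * D) 2, ← Real.rpow_mul (by positivity)]
      norm_num
    rw [e1, e2, e3]
    exact rpow_add_le (by positivity) (by positivity) (by linarith) (by linarith)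
  have t3 : 0 ≤ (B ^ 2) ^ lam * (D ^ 2) ^ lam := by positivity
  have hexp : ((A ^ 2) ^ lam + (B ^ 2) ^ lam) * ((C ^ 2) ^ lam + (D ^ 2) ^ lam) =
      (A ^ 2) ^ lam * (C ^ 2) ^ lam + (A ^ 2) ^ lam * (D ^ 2) ^ lam +
        (B ^ 2) ^ lam * (C ^ 2) ^ lam + (B ^ 2) ^ lam * (D ^ 2) ^ lam := by ring
  linarith [t1, t2, t3, hexp]

lemma Hren_eq {lam p1 p2 : ℝ} (h : lam ≠ 1) :
    Hren lam p1 p2 = (1 - lam)⁻¹ * Real.log (pw p1 lam + pw p2 lam) := if_neg h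

lemma gfun_zero {α β γ : ℝ} (hα : α ≠ 1) (hβ : β ≠ 1) :
    gfun α β γ 0 = (1 - β)⁻¹ * Real.log (pw (Real.cos γ ^ 2) β + pw (1 - Real.cos γ ^ 2) β) := by
  unfold gfun
  rw [Hren_eq hα, Hren_eq hβ]
  simp only [Real.cos_zero, Real.sin_zero, sub_zero]
  rw [Real.sin_sq]
  rw [one_pow, pw_one', show ((0:ℝ)^2) = 0 by ring, pw_zero']
  norm_num

lemma gfun_gamma {α β γ : ℝ} (hα : α ≠ 1) (hβ : β ≠ 1) :
    gfun α β γ γ = (1 - α)⁻¹ * Real.log (pw (Real.cos γ ^ 2) α + pw (1 - Real.cos γ ^ 2) α) := by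
  unfold gfun
  rw [Hren_eq hα, Hren_eq hβ]
  simp only [sub_self, Real.cos_zero, Real.sin_zero]
  rw [Real.sin_sq]
  rw [one_pow, pw_one', show ((0:ℝ)^2) = 0 by ring, pw_zero']
  norm_num

/-- value and minimizers of `g` on `[0, γ]` when `α, β ∈ [0, 1/2]`. -/
theorem stmt_4 (γ : ℝ) (hγ : γ ∈ Set.Icc 0 (Real.pi / 4))
    (c : ℝ) (hc : c = Real.cos γ)
    (α β : ℝ) (hα : α ∈ Set.Icc (0 : ℝ) (1 / 2)) (hβ : β ∈ Set.Icc (0 : ℝ) (1 / 2))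
    (lam : ℝ) (hlam : lam = max α β) :
    IsLeast ((fun θ : ℝ => gfun α β γ θ) '' Set.Icc 0 γ)
      ((1 - lam)⁻¹ * Real.log (pw (c ^ 2) lam + pw (1 - c ^ 2) lam)) ∧
    (α < β → gfun α β γ 0 =
      (1 - lam)⁻¹ * Real.log (pw (c ^ 2) lam + pw (1 - c ^ 2) lam)) ∧
    (β < α → gfun α β γ γ =
      (1 - lam)⁻¹ * Real.log (pw (c ^ 2) lam + pw (1 - c ^ 2) lam)) ∧
    (α = β → gfun α β γ 0 =
        (1 - lam)⁻¹ * Real.log (pw (c ^ 2) lam + pw (1 - c ^ 2) lam) ∧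
      gfun α β γ γ =
        (1 - lam)⁻¹ * Real.log (pw (c ^ 2) lam + pw (1 - c ^ 2) lam)) := by
  obtain ⟨hγ0, hγ4⟩ := hγ
  obtain ⟨hα0, hα2⟩ := hα
  obtain ⟨hβ0, hβ2⟩ := hβ
  have hαne : α ≠ 1 := by intro h; rw [h] at hα2; norm_num at hα2
  have hβne : β ≠ 1 := by intro h; rw [h] at hβ2; norm_num at hβ2
  have hl0 : 0 ≤ lam := hlam ▸ le_trans hα0 (le_max_left α β)
  have hl2 : lam ≤ 1 / 2 := hlam ▸ max_le hα2 hβ2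
  have hαl : α ≤ lam := hlam ▸ le_max_left α β
  have hβl : β ≤ lam := hlam ▸ le_max_right α β
  -- value at θ = 0 (in terms of β) and θ = γ (in terms of α)
  have hg0 : gfun α β γ 0 = (1 - β)⁻¹ * Real.log (pw (c ^ 2) β + pw (1 - c ^ 2) β) := by
    rw [gfun_zero hαne hβne, hc]
  have hgγ : gfun α β γ γ = (1 - α)⁻¹ * Real.log (pw (c ^ 2) α + pw (1 - c ^ 2) α) := by
    rw [gfun_gamma hαne hβne, hc]
  -- lower bound
  have hlb : ∀ θ ∈ Set.Icc 0 γ, (1 - lam)⁻¹ * Real.log (pw (c ^ 2) lam + pw (1 - c ^ 2) lam) ≤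
      gfun α β γ θ := by
    intro θ ⟨hθ0, hθγ⟩
    have hcos_mem : ∀ t : ℝ, (Real.cos t ^ 2 : ℝ) ≤ 1 := by
      intro t; nlinarith [Real.cos_le_one t, Real.neg_one_le_cos t]
    have h1 : (1 - lam)⁻¹ * Real.log (pw (Real.cos θ ^ 2) lam + pw (1 - Real.cos θ ^ 2) lam) ≤
        Hren α (Real.cos θ ^ 2) (Real.sin θ ^ 2) := by
      rw [Hren_eq hαne, Real.sin_sq]
      exact renyi_mono (sq_nonneg _) (hcos_mem θ) hα0 hαl hl2
    have h2 : (1 - lam)⁻¹ *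
        Real.log (pw (Real.cos (γ - θ) ^ 2) lam + pw (1 - Real.cos (γ - θ) ^ 2) lam) ≤
        Hren β (Real.cos (γ - θ) ^ 2) (Real.sin (γ - θ) ^ 2) := by
      rw [Hren_eq hβne, Real.sin_sq]
      exact renyi_mono (sq_nonneg _) (hcos_mem (γ - θ)) hβ0 hβl hl2
    -- submultiplicativity: S lam γ ≤ S lam θ * S lam (γ - θ)
    have hsub := S_submul hl0 hl2 hθ0 (by linarith : (0:ℝ) ≤ γ - θ)
      (by rw [show θ + (γ - θ) = γ by ring]; exact hγ4)
    rw [show θ + (γ - θ) = γ by ring] at hsub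
    have hS1 : (1:ℝ) ≤ pw (Real.cos θ ^ 2) lam + pw (Real.sin θ ^ 2) lam := by
      rw [Real.sin_sq]; exact one_le_S (sq_nonneg _) (hcos_mem θ) (by linarith)
    have hS2 : (1:ℝ) ≤ pw (Real.cos (γ - θ) ^ 2) lam + pw (Real.sin (γ - θ) ^ 2) lam := by
      rw [Real.sin_sq]; exact one_le_S (sq_nonneg _) (hcos_mem (γ - θ)) (by linarith)
    have hSγ : (0:ℝ) < pw (Real.cos γ ^ 2) lam + pw (Real.sin γ ^ 2) lam := by
      have : (1:ℝ) ≤ pw (Real.cos γ ^ 2) lam + pw (Real.sin γ ^ 2) lam := by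
        rw [Real.sin_sq]; exact one_le_S (sq_nonneg _) (hcos_mem γ) (by linarith)
      linarith
    have hlog : Real.log (pw (Real.cos γ ^ 2) lam + pw (Real.sin γ ^ 2) lam) ≤
        Real.log (pw (Real.cos θ ^ 2) lam + pw (Real.sin θ ^ 2) lam) +
        Real.log (pw (Real.cos (γ - θ) ^ 2) lam + pw (Real.sin (γ - θ) ^ 2) lam) := by
      rw [← Real.log_mul (by linarith) (by linarith)]
      exact Real.log_le_log hSγ hsub
    have hinv : (0:ℝ) ≤ (1 - lam)⁻¹ := by
      apply inv_nonneg.2; linarith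
    have hchain : (1 - lam)⁻¹ * Real.log (pw (Real.cos γ ^ 2) lam + pw (Real.sin γ ^ 2) lam) ≤
        gfun α β γ θ := by
      unfold gfun
      calc (1 - lam)⁻¹ * Real.log (pw (Real.cos γ ^ 2) lam + pw (Real.sin γ ^ 2) lam)
          ≤ (1 - lam)⁻¹ *
            (Real.log (pw (Real.cos θ ^ 2) lam + pw (Real.sin θ ^ 2) lam) +
             Real.log (pw (Real.cos (γ - θ) ^ 2) lam + pw (Real.sin (γ - θ) ^ 2) lam)) :=
            mul_le_mul_of_nonneg_left hlog hinv
        _ = (1 - lam)⁻¹ * Real.log (pw (Real.cos θ ^ 2) lam + pw (Real.sin θ ^ 2) lam) +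
            (1 - lam)⁻¹ *
              Real.log (pw (Real.cos (γ - θ) ^ 2) lam + pw (Real.sin (γ - θ) ^ 2) lam) := by
            ring
        _ ≤ Hren α (Real.cos θ ^ 2) (Real.sin θ ^ 2) +
            Hren β (Real.cos (γ - θ) ^ 2) (Real.sin (γ - θ) ^ 2) := by
            apply add_le_add
            · rw [Real.sin_sq] at h1 ⊢; exact h1
            · rw [Real.sin_sq] at h2 ⊢; exact h2
    rw [Real.sin_sq, ← hc] at hchain
    exact hchain
  constructor
  · constructor
    · -- membership: attained at an endpoint
      rcases le_total α β with hab | hab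
      · have hlamβ : lam = β := by rw [hlam, max_eq_right hab]
        exact ⟨0, ⟨le_refl 0, hγ0⟩, by show gfun α β γ 0 = _; rw [hg0, hlamβ]⟩
      · have hlamα : lam = α := by rw [hlam, max_eq_left hab]
        exact ⟨γ, ⟨hγ0, le_refl γ⟩, by show gfun α β γ γ = _; rw [hgγ, hlamα]⟩
    · rintro v ⟨θ, hθ, rfl⟩
      exact hlb θ hθ
  refine ⟨fun h => ?_, fun h => ?_, fun h => ?_⟩
  · rw [hg0, hlam, max_eq_right h.le]
  · rw [hgγ, hlam, max_eq_left h.le]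
  · constructor
    · rw [hg0, hlam, max_eq_right h.le]
    · rw [hgγ, hlam, max_eq_left h.ge]
end

section
/- Let T = Φ(u) V(γ_T) Φ(v) be a 2×2 unitary matrix (Φ(x) = diag(e^{ix₁}, e^{ix₂}), V(γ_T) = [[cos γ_T, sin γ_T], [−sin γ_T, cos γ_T]], γ_T ∈ [0, π/2]), with overlap c and γ = min(γ_T, π/2 − γ_T) = arccos c ∈ [0, π/4]. Let θ₀ ∈ [0, γ], ε = 1 if γ_T ≤ π/4 and ε = −1 otherwise, n ∈ {0,1}, φ ∈ ℝ, and set ψ = e^{iφ} Φ(−v) · (cos(ε θ₀ + nπ/2), sin(ε θ₀ + nπ/2))ᵗ. Then the probability vectors P^A = |ψ|² and P^B = |Tψ|² satisfy arccos(√(max_k P^A_k)) + arccos(√(max_l P^B_l)) = arccos c, i.e., these states saturate the Landau–Pollak inequality. -/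
open Real

noncomputable def Fm (θ : ℝ) : ℝ :=
  Real.arccos (Real.sqrt (max (Real.cos θ ^ 2) (Real.sin θ ^ 2)))

lemma abs_aux (c : ℝ) (r : ℝ) :
    ‖Complex.exp (Complex.I * c) * (r:ℂ)‖ = |r| := by
  simp [Complex.norm_exp]

lemma Fm_eq {θ : ℝ} (h1 : -(π/4) ≤ θ) (h2 : θ ≤ π/4) : Fm θ = |θ| := by
  unfold Fm
  have hmax : max (Real.cos θ ^ 2) (Real.sin θ ^ 2) = Real.cos θ ^ 2 := by
    rw [max_eq_left_iff]
    nlinarith [Real.cos_two_mul θ, Real.sin_sq_add_cos_sq θ,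
      Real.cos_nonneg_of_mem_Icc (show 2*θ ∈ Set.Icc (-(π/2)) (π/2) by
        constructor <;> linarith)]
  have hcos : Real.cos θ = Real.cos |θ| := (Real.cos_abs θ).symm
  rw [hmax, Real.sqrt_sq_eq_abs,
    _root_.abs_of_nonneg (Real.cos_nonneg_of_mem_Icc
      ⟨by linarith [Real.pi_pos], by linarith [Real.pi_pos]⟩), hcos,
    Real.arccos_cos (abs_nonneg θ) (by rw [abs_le]; constructor <;> linarith [Real.pi_pos])]

lemma Fm_shift (θ : ℝ) : Fm (θ + π/2) = Fm θ := by
  unfold Fm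
  rw [Real.cos_add_pi_div_two, Real.sin_add_pi_div_two]
  ring_nf
  rw [max_comm]

lemma Fm_neg (θ : ℝ) : Fm (-θ) = Fm θ := by
  unfold Fm
  rw [Real.cos_neg, Real.sin_neg, neg_sq]

/-- the optimal states saturate the Landau–Pollak inequality. -/
theorem stmt_6 (u v : Fin 2 → ℝ) (γT : ℝ)
    (hγT : γT ∈ Set.Icc 0 (Real.pi / 2))
    (T : Matrix (Fin 2) (Fin 2) ℂ)
    (hTdec : T = PhiM u * Vrot γT * PhiM v)
    (γ : ℝ) (hγ : γ = min γT (Real.pi / 2 - γT))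
    (c : ℝ) (hc : c = Real.cos γ) (hγc : γ = Real.arccos c)
    (θ₀ : ℝ) (hθ₀ : θ₀ ∈ Set.Icc 0 γ)
    (ε : ℝ) (hε : ε = if γT ≤ Real.pi / 4 then (1 : ℝ) else -1)
    (n : ℕ) (hn : n = 0 ∨ n = 1) (φ : ℝ)
    (ψ : Fin 2 → ℂ)
    (hψ : ψ = fun k =>
      Complex.exp (Complex.I * (φ : ℂ)) *
        (PhiM (-v)).mulVec
          ![(Real.cos (ε * θ₀ + n * (Real.pi / 2)) : ℂ),
            (Real.sin (ε * θ₀ + n * (Real.pi / 2)) : ℂ)] k) :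
    Real.arccos (Real.sqrt (max (‖ψ 0‖ ^ 2) (‖ψ 1‖ ^ 2))) +
      Real.arccos (Real.sqrt (max (‖T.mulVec ψ 0‖ ^ 2)
        (‖T.mulVec ψ 1‖ ^ 2))) = Real.arccos c := by
  set α : ℝ := ε * θ₀ + n * (Real.pi / 2) with hα
  -- components of ψ
  have hψ0 : ψ 0 = Complex.exp (Complex.I * ((φ - v 0 : ℝ) : ℂ)) * (Real.cos α : ℂ) := by
    rw [hψ]
    simp only [PhiM, Matrix.mulVec_diagonal, Pi.neg_apply, Matrix.cons_val_zero]
    rw [← mul_assoc, ← Complex.exp_add]; push_cast; ring_nf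
  have hψ1 : ψ 1 = Complex.exp (Complex.I * ((φ - v 1 : ℝ) : ℂ)) * (Real.sin α : ℂ) := by
    rw [hψ]
    simp only [PhiM, Matrix.mulVec_diagonal, Pi.neg_apply, Matrix.cons_val_one, Matrix.head_cons]
    rw [← mul_assoc, ← Complex.exp_add]; push_cast; ring_nf
  -- components of Tψ
  have e0 : Complex.exp (Complex.I * ((v 0 : ℝ):ℂ)) *
      Complex.exp (Complex.I * ((φ:ℂ) - ((v 0:ℝ):ℂ))) = Complex.exp (Complex.I * (φ:ℂ)) := by
    rw [← Complex.exp_add]; ring_nf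
  have e1 : Complex.exp (Complex.I * ((v 1 : ℝ):ℂ)) *
      Complex.exp (Complex.I * ((φ:ℂ) - ((v 1:ℝ):ℂ))) = Complex.exp (Complex.I * (φ:ℂ)) := by
    rw [← Complex.exp_add]; ring_nf
  have e2 : ∀ k : Fin 2, Complex.exp (Complex.I * ((φ:ℂ) + ((u k:ℝ):ℂ))) =
      Complex.exp (Complex.I * (φ:ℂ)) * Complex.exp (Complex.I * ((u k:ℝ):ℂ)) := by
    intro k; rw [← Complex.exp_add]; ring_nf
  have hT01 : T.mulVec ψ 0 =
        Complex.exp (Complex.I * ((φ + u 0 : ℝ) : ℂ)) * (Real.cos (α - γT) : ℂ) ∧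
      T.mulVec ψ 1 =
        Complex.exp (Complex.I * ((φ + u 1 : ℝ) : ℂ)) * (Real.sin (α - γT) : ℂ) := by
    rw [hTdec]
    constructor <;>
    · simp only [Matrix.mulVec, Matrix.mul_apply, PhiM, Vrot, Matrix.diagonal, Fin.sum_univ_two,
        dotProduct, hψ0, hψ1, Matrix.cons_val', Matrix.cons_val_zero, Matrix.cons_val_one,
        Matrix.head_cons, Matrix.head_fin_const, Matrix.of_apply, Matrix.cons_val_fin_one,
        Matrix.empty_val', Fin.isValue]
      norm_num
      rw [e2]
      first
      | (rw [Complex.cos_sub]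
         linear_combination (Complex.exp (Complex.I * ((u 0:ℝ):ℂ)) * Complex.cos (γT:ℂ) *
             Complex.cos (α:ℂ)) * e0 +
           (Complex.exp (Complex.I * ((u 0:ℝ):ℂ)) * Complex.sin (γT:ℂ) *
             Complex.sin (α:ℂ)) * e1)
      | (rw [Complex.sin_sub]
         linear_combination (-(Complex.exp (Complex.I * ((u 1:ℝ):ℂ)) * Complex.sin (γT:ℂ) *
             Complex.cos (α:ℂ))) * e0 +
           (Complex.exp (Complex.I * ((u 1:ℝ):ℂ)) * Complex.cos (γT:ℂ) *
             Complex.sin (α:ℂ)) * e1)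
  rw [hψ0, hψ1, hT01.1, hT01.2, abs_aux, abs_aux, abs_aux, abs_aux,
    sq_abs, sq_abs, sq_abs, sq_abs]
  show Fm α + Fm (α - γT) = Real.arccos c
  rw [← hγc]
  -- reduce to n = 0
  have hred : Fm α + Fm (α - γT) = Fm (ε * θ₀) + Fm (ε * θ₀ - γT) := by
    rcases hn with hn | hn <;> subst hn
    · norm_num [hα]
    · have h1 : α = ε * θ₀ + π / 2 := by rw [hα]; push_cast; ring
      rw [h1, show ε * θ₀ + π / 2 - γT = (ε * θ₀ - γT) + π / 2 from by ring,
        Fm_shift, Fm_shift]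
  rw [hred]
  obtain ⟨hγT0, hγT2⟩ := hγT
  obtain ⟨hθ0, hθγ⟩ := hθ₀
  have hpi := Real.pi_pos
  by_cases hle : γT ≤ π / 4
  · have hεv : ε = 1 := by rw [hε, if_pos hle]
    have hγv : γ = γT := by rw [hγ, min_eq_left (by linarith)]
    have hθT : θ₀ ≤ γT := hγv ▸ hθγ
    rw [hεv, one_mul, Fm_eq (by linarith) (by linarith), Fm_eq (by linarith) (by linarith),
      _root_.abs_of_nonneg hθ0, abs_of_nonpos (by linarith), hγv]
    ring
  · push_neg at hle
    have hεv : ε = -1 := by rw [hε, if_neg (not_le.mpr hle)]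
    have hγv : γ = π / 2 - γT := by rw [hγ, min_eq_right (by linarith)]
    have hθT : θ₀ ≤ π / 2 - γT := hγv ▸ hθγ
    have hF1 : Fm (ε * θ₀) = θ₀ := by
      rw [hεv, neg_one_mul, Fm_neg,
        Fm_eq (by linarith) (by linarith), _root_.abs_of_nonneg hθ0]
    have hF2 : Fm (ε * θ₀ - γT) = π / 2 - θ₀ - γT := by
      have h3 : ε * θ₀ - γT = -((θ₀ + γT - π / 2) + π / 2) := by rw [hεv]; ring
      rw [h3, Fm_neg, Fm_shift, Fm_eq (by linarith) (by linarith),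
        abs_of_nonpos (by linarith)]
      ring
    rw [hF1, hF2, hγv]
    ring
end

section
/- Let γ, θ ∈ [0, π/4], β ≥ 0, and t ∈ [0, 1]. Define the probability vector z = ( t·cos²(γ−θ) + (1−t)·cos²(γ+θ), t·sin²(γ−θ) + (1−t)·sin²(γ+θ) ). Then H_β(z) ≥ H_β((cos²(γ−θ), sin²(γ−θ))), with equality at t = 1; i.e., the minimum of H_β over the segment joining (cos²(γ−θ), sin²(γ−θ)) and (cos²(γ+θ), sin²(γ+θ)) is H_β((cos²(γ−θ), sin²(γ−θ))). -/
open Real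

-- key lemma: for a ∈ [1/2,1], p ∈ [1-a, a], H_β(a,1-a) ≤ H_β(p,1-p)
lemma key (β : ℝ) (hβ : 0 ≤ β) (a p : ℝ) (ha : 1/2 ≤ a) (ha1 : a ≤ 1)
    (hp1 : 1 - a ≤ p) (hp2 : p ≤ a) :
    Hren β a (1-a) ≤ Hren β p (1-p) := by
  -- obtain convex combination
  have hseg : p ∈ segment ℝ (1-a) a := by
    rw [segment_eq_Icc (by linarith)]; exact ⟨hp1, hp2⟩
  obtain ⟨u, v, hu, hv, huv, hp⟩ := hseg
  simp only [smul_eq_mul] at hp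
  have h1p : 1 - p = u * a + v * (1-a) := by nlinarith
  rcases eq_or_ne β 1 with rfl | hβ1
  · -- Shannon case
    have hcc := Real.concaveOn_negMulLog
    have e1 : u • negMulLog (1-a) + v • negMulLog a ≤ negMulLog p := by
      have := hcc.2 (Set.mem_Ici.2 (by linarith : (0:ℝ) ≤ 1-a))
        (Set.mem_Ici.2 (by linarith : (0:ℝ) ≤ a)) hu hv huv
      simpa [smul_eq_mul, hp] using this
    have e2 : u • negMulLog a + v • negMulLog (1-a) ≤ negMulLog (1-p) := by
      have := hcc.2 (Set.mem_Ici.2 (by linarith : (0:ℝ) ≤ a))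
        (Set.mem_Ici.2 (by linarith : (0:ℝ) ≤ 1-a)) hu hv huv
      simpa [smul_eq_mul, ← h1p] using this
    have ea : negMulLog a + negMulLog (1-a) ≤ negMulLog p + negMulLog (1-p) := by
      have hsum := add_le_add e1 e2
      simp only [smul_eq_mul] at hsum
      have hv' : v = 1 - u := by linarith
      rw [hv'] at hsum
      linarith [hsum]
    have hH : ∀ x y : ℝ, Hren 1 x y = -(x * Real.log x + y * Real.log y) :=
      fun x y => if_pos rfl
    rw [hH, hH]
    simp only [negMulLog] at ea
    linarith
  rcases eq_or_lt_of_le hβ with rfl | hβ0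
  · -- β = 0
    simp only [Hren, if_neg hβ1, pw]
    have hane : a ≠ 0 := by positivity
    rcases eq_or_lt_of_le ha1 with rfl | halt
    · simp only [if_neg hane, sub_self, if_pos rfl, Real.rpow_zero]
      have h2 : (1:ℝ) ≤ (if p = 0 then 0 else p ^ (0:ℝ)) + (if 1 - p = 0 then 0 else (1-p) ^ (0:ℝ)) := by
        rcases eq_or_ne p 0 with rfl | hp0
        · simp
        · rcases eq_or_ne (1-p) 0 with h | h <;> simp [hp0, h] <;> norm_num
      have := Real.log_nonneg h2
      simpa using this
    · have h1a : (1:ℝ) - a ≠ 0 := by intro h; linarith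
      have hpne : p ≠ 0 := by intro h; rw [h] at hp1; linarith
      have h1pne : (1:ℝ) - p ≠ 0 := by intro h; nlinarith
      simp [hane, h1a, hpne, h1pne]
  · -- β > 0, β ≠ 1 : rewrite pw as rpow
    have hpw : ∀ x : ℝ, pw x β = x ^ β := by
      intro x; unfold pw; split
      · rename_i h; rw [h, Real.zero_rpow (ne_of_gt hβ0)]
      · rfl
    simp only [Hren, if_neg hβ1, hpw]
    -- positivity of f x = x^β + (1-x)^β for x ∈ [1-a,a]
    have fpos : ∀ x : ℝ, 0 ≤ x → x ≤ 1 → 0 < x ^ β + (1-x) ^ β := by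
      intro x hx0 hx1
      have hh : (0:ℝ) < (1/2:ℝ) ^ β := Real.rpow_pos_of_pos (by norm_num) β
      rcases le_total x (1/2) with h | h
      · have : (1/2:ℝ) ^ β ≤ (1-x) ^ β := Real.rpow_le_rpow (by norm_num) (by linarith) hβ
        have := Real.rpow_nonneg hx0 β; linarith
      · have : (1/2:ℝ) ^ β ≤ x ^ β := Real.rpow_le_rpow (by norm_num) h hβ
        have := Real.rpow_nonneg (by linarith : (0:ℝ) ≤ 1-x) β; linarith
    have hfa := fpos a (by linarith) ha1
    have hfp := fpos p (by linarith) (by linarith)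
    rcases lt_or_gt_of_ne hβ1 with hlt | hgt
    · -- β < 1 : concave, f p ≥ f a, coefficient positive
      have hcc := Real.concaveOn_rpow hβ hlt.le
      have e1 : u • ((1-a):ℝ) ^ β + v • a ^ β ≤ p ^ β := by
        have := hcc.2 (Set.mem_Ici.2 (by linarith : (0:ℝ) ≤ 1-a))
          (Set.mem_Ici.2 (by linarith : (0:ℝ) ≤ a)) hu hv huv
        simpa [smul_eq_mul, hp] using this
      have e2 : u • (a:ℝ) ^ β + v • ((1-a):ℝ) ^ β ≤ (1-p) ^ β := by
        have := hcc.2 (Set.mem_Ici.2 (by linarith : (0:ℝ) ≤ a))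
          (Set.mem_Ici.2 (by linarith : (0:ℝ) ≤ 1-a)) hu hv huv
        simpa [smul_eq_mul, ← h1p] using this
      simp only [smul_eq_mul] at e1 e2
      have hle : a ^ β + (1-a) ^ β ≤ p ^ β + (1-p) ^ β := by nlinarith
      have hlog := Real.log_le_log hfa hle
      have hcoef : (0:ℝ) ≤ (1-β)⁻¹ := by
        apply inv_nonneg.2; linarith
      exact mul_le_mul_of_nonneg_left hlog hcoef
    · -- β > 1 : convex, f p ≤ f a, coefficient negative
      have hcv := convexOn_rpow hgt.le
      have e1 : p ^ β ≤ u • ((1-a):ℝ) ^ β + v • a ^ β := by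
        have := hcv.2 (Set.mem_Ici.2 (by linarith : (0:ℝ) ≤ 1-a))
          (Set.mem_Ici.2 (by linarith : (0:ℝ) ≤ a)) hu hv huv
        simpa [smul_eq_mul, hp] using this
      have e2 : (1-p) ^ β ≤ u • (a:ℝ) ^ β + v • ((1-a):ℝ) ^ β := by
        have := hcv.2 (Set.mem_Ici.2 (by linarith : (0:ℝ) ≤ a))
          (Set.mem_Ici.2 (by linarith : (0:ℝ) ≤ 1-a)) hu hv huv
        simpa [smul_eq_mul, ← h1p] using this
      simp only [smul_eq_mul] at e1 e2
      have hle : p ^ β + (1-p) ^ β ≤ a ^ β + (1-a) ^ β := by nlinarith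
      have hlog := Real.log_le_log hfp hle
      have hcoef : (1-β)⁻¹ ≤ (0:ℝ) := by
        apply inv_nonpos.2; linarith
      exact mul_le_mul_of_nonpos_left hlog hcoef

/-- the minimum of `H_β` over the segment joining
`(cos²(γ−θ), sin²(γ−θ))` and `(cos²(γ+θ), sin²(γ+θ))` is attained at `t = 1`. -/
theorem stmt_9 (γ θ : ℝ)
    (hγ : γ ∈ Set.Icc 0 (Real.pi / 4)) (hθ : θ ∈ Set.Icc 0 (Real.pi / 4))
    (β : ℝ) (hβ : 0 ≤ β)
    (t : ℝ) (ht : t ∈ Set.Icc (0 : ℝ) 1)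
    (z1 z2 : ℝ)
    (hz1 : z1 = t * Real.cos (γ - θ) ^ 2 + (1 - t) * Real.cos (γ + θ) ^ 2)
    (hz2 : z2 = t * Real.sin (γ - θ) ^ 2 + (1 - t) * Real.sin (γ + θ) ^ 2) :
    Hren β (Real.cos (γ - θ) ^ 2) (Real.sin (γ - θ) ^ 2) ≤ Hren β z1 z2 ∧
    (t = 1 → Hren β z1 z2 = Hren β (Real.cos (γ - θ) ^ 2) (Real.sin (γ - θ) ^ 2)) := by
  obtain ⟨hγ0, hγ1⟩ := hγ
  obtain ⟨hθ0, hθ1⟩ := hθ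
  obtain ⟨ht0, ht1⟩ := ht
  have hπ : (0:ℝ) < Real.pi := Real.pi_pos
  set a : ℝ := Real.cos (γ - θ) ^ 2 with hadef
  set b : ℝ := Real.cos (γ + θ) ^ 2 with hbdef
  clear_value a b
  -- basic trig rewrites
  have hsin1 : Real.sin (γ - θ) ^ 2 = 1 - a := by
    have := Real.sin_sq_add_cos_sq (γ - θ); linarith
  have hsin2 : Real.sin (γ + θ) ^ 2 = 1 - b := by
    have := Real.sin_sq_add_cos_sq (γ + θ); linarith
  have hacos : a = 1/2 + Real.cos (2*γ - 2*θ) / 2 := by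
    have := Real.cos_sq (γ - θ)
    rw [hadef, this]; ring_nf
  have hbcos : b = 1/2 + Real.cos (2*γ + 2*θ) / 2 := by
    have := Real.cos_sq (γ + θ)
    rw [hbdef, this]; ring_nf
  -- 1/2 ≤ a
  have hc1 : 0 ≤ Real.cos (2*γ - 2*θ) :=
    Real.cos_nonneg_of_neg_pi_div_two_le_of_le (by linarith) (by linarith)
  have ha : 1/2 ≤ a := by rw [hacos]; linarith
  -- a ≤ 1
  have ha1 : a ≤ 1 := by
    rw [hadef]
    have := Real.cos_sq_le_one (γ - θ)
    nlinarith [sq_nonneg (Real.cos (γ - θ))]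
  -- b ≤ a : cos(2γ+2θ) ≤ cos(2γ-2θ)
  have hba : b ≤ a := by
    have hs1 : 0 ≤ Real.sin (2*γ) :=
      Real.sin_nonneg_of_nonneg_of_le_pi (by linarith) (by linarith)
    have hs2 : 0 ≤ Real.sin (2*θ) :=
      Real.sin_nonneg_of_nonneg_of_le_pi (by linarith) (by linarith)
    have e1 : Real.cos (2*γ + 2*θ) = Real.cos (2*γ) * Real.cos (2*θ)
        - Real.sin (2*γ) * Real.sin (2*θ) := Real.cos_add _ _
    have e2 : Real.cos (2*γ - 2*θ) = Real.cos (2*γ) * Real.cos (2*θ)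
        + Real.sin (2*γ) * Real.sin (2*θ) := Real.cos_sub _ _
    rw [hacos, hbcos]; nlinarith
  -- 1 - a ≤ b : cos(2γ+2θ) + cos(2γ-2θ) ≥ 0
  have h1ab : 1 - a ≤ b := by
    have hc2 : 0 ≤ Real.cos (2*γ) :=
      Real.cos_nonneg_of_neg_pi_div_two_le_of_le (by linarith) (by linarith)
    have hc3 : 0 ≤ Real.cos (2*θ) :=
      Real.cos_nonneg_of_neg_pi_div_two_le_of_le (by linarith) (by linarith)
    have e1 : Real.cos (2*γ + 2*θ) = Real.cos (2*γ) * Real.cos (2*θ)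
        - Real.sin (2*γ) * Real.sin (2*θ) := Real.cos_add _ _
    have e2 : Real.cos (2*γ - 2*θ) = Real.cos (2*γ) * Real.cos (2*θ)
        + Real.sin (2*γ) * Real.sin (2*θ) := Real.cos_sub _ _
    rw [hacos, hbcos]; nlinarith
  -- z2 = 1 - z1, and z1 ∈ [1-a, a]
  have hz2' : z2 = 1 - z1 := by
    rw [hz1, hz2, hsin1, hsin2]; ring
  have hz1a : z1 ≤ a := by
    rw [hz1]; linarith [mul_nonneg (by linarith : (0:ℝ) ≤ 1-t) (by linarith : (0:ℝ) ≤ a - b)]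
  have hz1b : 1 - a ≤ z1 := by
    rw [hz1]; linarith [mul_nonneg ht0 (by linarith : (0:ℝ) ≤ a - (1-a)), mul_nonneg (by linarith : (0:ℝ) ≤ 1-t) (by linarith : (0:ℝ) ≤ b - (1-a))]
  constructor
  · rw [hz2', hsin1]
    exact key β hβ a z1 ha ha1 hz1b hz1a
  · intro hteq
    subst hteq
    rw [hz1, hz2]; congr 1 <;> ring
end

section
/- For all θ, γ ∈ [0, π/4] and all β ≥ 0, H_β((cos²(γ+θ), sin²(γ+θ))) ≥ H_β((cos²(γ−θ), sin²(γ−θ))). Equivalently, for β ≥ 0, β ≠ 1, the quantity Δ(θ, γ) = [ D_β(γ−θ) − D_β(γ+θ) ] / (β − 1) is nonnegative on [0, π/4]², where D_β(x) = (cos²x)^β + (sin²x)^β. -/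
open Real

/-- `D_λ(θ) = (cos²θ)^λ + (sin²θ)^λ` (with the convention `0^λ = 0`). -/
noncomputable def Dfun (lam θ : ℝ) : ℝ :=
  pw (Real.cos θ ^ 2) lam + pw (Real.sin θ ^ 2) lam

lemma pw_def {p : ℝ} (hp : 0 < p) (lam : ℝ) : pw p lam = p ^ lam := if_neg hp.ne'

/-- `g(s) = s^β + (1-s)^β` is monotone on `[0,1/2]` for `0 ≤ β ≤ 1`. -/
lemma gmono {β s t : ℝ} (hβ0 : 0 ≤ β) (hβ1 : β ≤ 1)
    (hs : 0 ≤ s) (hst : s ≤ t) (ht : t ≤ 1 / 2) :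
    pw s β + pw (1 - s) β ≤ pw t β + pw (1 - t) β := by
  rcases eq_or_lt_of_le hst with rfl | hlt
  · exact le_refl _
  have ht0 : 0 < t := lt_of_le_of_lt hs hlt
  have h1t : 0 < 1 - t := by linarith
  have h1s : 0 < 1 - s := by linarith
  rw [pw_def ht0, pw_def h1t, pw_def h1s]
  rcases eq_or_lt_of_le hs with rfl | hs0
  · have e0 : pw 0 β = 0 := if_pos rfl
    rw [e0]
    have e1 : (1 - (0:ℝ)) ^ β = 1 := by norm_num
    rw [e1]
    have h1 : t ^ (1:ℝ) ≤ t ^ β :=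
      Real.rpow_le_rpow_of_exponent_ge ht0 (by linarith) hβ1
    have h2 : (1 - t) ^ (1:ℝ) ≤ (1 - t) ^ β :=
      Real.rpow_le_rpow_of_exponent_ge h1t (by linarith) hβ1
    rw [Real.rpow_one] at h1 h2
    linarith
  · rw [pw_def hs0]
    have hconc := Real.concaveOn_rpow hβ0 hβ1
    set f : ℝ → ℝ := fun x : ℝ ↦ x ^ β with hf
    have hkey : f (1 - s) - f (1 - t) ≤ f t - f s := by
      rcases eq_or_lt_of_le (show t ≤ 1 - t by linarith) with heq | hlt2
      · have hA := hconc.slope_anti_adjacent (Set.mem_Ici.2 hs0.le)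
          (Set.mem_Ici.2 h1s.le) hlt (show t < 1 - s by linarith [heq])
        have hd : 1 - s - t = t - s := by linarith [heq]
        rw [hd] at hA
        have := (div_le_div_iff_of_pos_right (show (0:ℝ) < t - s by linarith)).mp hA
        have hft : f (1 - t) = f t := by rw [← heq]
        linarith
      · have hA := hconc.slope_anti_adjacent (Set.mem_Ici.2 hs0.le)
          (Set.mem_Ici.2 h1t.le) hlt hlt2
        have hB := hconc.slope_anti_adjacent (Set.mem_Ici.2 ht0.le)
          (Set.mem_Ici.2 h1s.le) hlt2 (show 1 - t < 1 - s by linarith)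
        have hd : 1 - s - (1 - t) = t - s := by ring
        rw [hd] at hB
        have hchain : (f (1 - s) - f (1 - t)) / (t - s) ≤ (f t - f s) / (t - s) :=
          le_trans hB hA
        exact (div_le_div_iff_of_pos_right (show (0:ℝ) < t - s by linarith)).mp hchain
    simp only [hf] at hkey
    linarith [hkey]

/-- `g(s) = s^β + (1-s)^β` is antitone on `[0,1/2]` for `β ≥ 1`. -/
lemma ganti {β s t : ℝ} (hβ1 : 1 ≤ β)
    (hs : 0 ≤ s) (hst : s ≤ t) (ht : t ≤ 1 / 2) :
    pw t β + pw (1 - t) β ≤ pw s β + pw (1 - s) β := by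
  rcases eq_or_lt_of_le hst with rfl | hlt
  · exact le_refl _
  have ht0 : 0 < t := lt_of_le_of_lt hs hlt
  have h1t : 0 < 1 - t := by linarith
  have h1s : 0 < 1 - s := by linarith
  rw [pw_def ht0, pw_def h1t, pw_def h1s]
  rcases eq_or_lt_of_le hs with rfl | hs0
  · have e0 : pw 0 β = 0 := if_pos rfl
    rw [e0]
    have e1 : (1 - (0:ℝ)) ^ β = 1 := by norm_num
    rw [e1]
    have h1 : t ^ β ≤ t ^ (1:ℝ) :=
      Real.rpow_le_rpow_of_exponent_ge ht0 (by linarith) hβ1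
    have h2 : (1 - t) ^ β ≤ (1 - t) ^ (1:ℝ) :=
      Real.rpow_le_rpow_of_exponent_ge h1t (by linarith) hβ1
    rw [Real.rpow_one] at h1 h2
    linarith
  · rw [pw_def hs0]
    have hconv := convexOn_rpow hβ1
    set f : ℝ → ℝ := fun x : ℝ ↦ x ^ β with hf
    have hkey : f t - f s ≤ f (1 - s) - f (1 - t) := by
      rcases eq_or_lt_of_le (show t ≤ 1 - t by linarith) with heq | hlt2
      · have hA := hconv.slope_mono_adjacent (Set.mem_Ici.2 hs0.le)
          (Set.mem_Ici.2 h1s.le) hlt (show t < 1 - s by linarith [heq])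
        have hd : 1 - s - t = t - s := by linarith [heq]
        rw [hd] at hA
        have := (div_le_div_iff_of_pos_right (show (0:ℝ) < t - s by linarith)).mp hA
        have hft : f (1 - t) = f t := by rw [← heq]
        linarith
      · have hA := hconv.slope_mono_adjacent (Set.mem_Ici.2 hs0.le)
          (Set.mem_Ici.2 h1t.le) hlt hlt2
        have hB := hconv.slope_mono_adjacent (Set.mem_Ici.2 ht0.le)
          (Set.mem_Ici.2 h1s.le) hlt2 (show 1 - t < 1 - s by linarith)
        have hd : 1 - s - (1 - t) = t - s := by ring
        rw [hd] at hB
        have hchain : (f t - f s) / (t - s) ≤ (f (1 - s) - f (1 - t)) / (t - s) :=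
          le_trans hA hB
        exact (div_le_div_iff_of_pos_right (show (0:ℝ) < t - s by linarith)).mp hchain
    simp only [hf] at hkey
    linarith [hkey]

lemma g_pos {β s : ℝ} (hs : 0 ≤ s) (hs2 : s ≤ 1 / 2) :
    0 < pw s β + pw (1 - s) β := by
  have h1 : 0 < 1 - s := by linarith
  have := pw_nonneg hs β
  rw [pw_def h1]
  have := Real.rpow_pos_of_pos h1 β
  linarith

lemma hren_comm (β p1 p2 : ℝ) : Hren β p1 p2 = Hren β p2 p1 := by
  unfold Hren
  split
  · ring
  · rw [add_comm (pw p1 β)]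

lemma hren_mono {β s t : ℝ} (hβ : 0 ≤ β)
    (hs : 0 ≤ s) (hst : s ≤ t) (ht : t ≤ 1 / 2) :
    Hren β (1 - s) s ≤ Hren β (1 - t) t := by
  by_cases h1 : β = 1
  · subst h1
    unfold Hren
    rw [if_pos rfl, if_pos rfl]
    have hbs : -((1 - s) * Real.log (1 - s) + s * Real.log s) = Real.binEntropy s := by
      unfold Real.binEntropy; rw [Real.log_inv, Real.log_inv]; ring
    have hbt : -((1 - t) * Real.log (1 - t) + t * Real.log t) = Real.binEntropy t := by
      unfold Real.binEntropy; rw [Real.log_inv, Real.log_inv]; ring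
    rw [hbs, hbt]
    exact Real.binEntropy_strictMonoOn.monotoneOn
      (Set.mem_Icc.2 ⟨hs, by norm_num; linarith⟩)
      (Set.mem_Icc.2 ⟨le_trans hs hst, by norm_num; linarith⟩) hst
  · unfold Hren
    rw [if_neg h1, if_neg h1]
    have hsum_s : 0 < pw (1 - s) β + pw s β := by
      rw [add_comm]; exact g_pos hs (le_trans hst ht)
    have hsum_t : 0 < pw (1 - t) β + pw t β := by
      rw [add_comm]; exact g_pos (le_trans hs hst) ht
    rcases lt_or_gt_of_ne h1 with hb | hb
    · have hg := gmono hβ hb.le hs hst ht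
      have hlog : Real.log (pw (1 - s) β + pw s β) ≤ Real.log (pw (1 - t) β + pw t β) :=
        Real.log_le_log hsum_s (by linarith [hg])
      have hpos : (0:ℝ) ≤ (1 - β)⁻¹ := by
        apply inv_nonneg.2; linarith
      exact mul_le_mul_of_nonneg_left hlog hpos
    · have hg := ganti hb.le hs hst ht
      have hlog : Real.log (pw (1 - t) β + pw t β) ≤ Real.log (pw (1 - s) β + pw s β) :=
        Real.log_le_log hsum_t (by linarith [hg])
      have hneg : (1 - β)⁻¹ ≤ 0 := by
        apply inv_nonpos.2; linarith
      exact mul_le_mul_of_nonpos_left hlog hneg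

/-- `H_β((cos²(γ+θ), sin²(γ+θ))) ≥ H_β((cos²(γ−θ), sin²(γ−θ)))` on
`[0, π/4]²`; equivalently `Δ(θ, γ) = (D_β(γ−θ) − D_β(γ+θ))/(β−1) ≥ 0`. -/
theorem stmt_10 :
    (∀ θ ∈ Set.Icc (0 : ℝ) (Real.pi / 4), ∀ γ ∈ Set.Icc (0 : ℝ) (Real.pi / 4),
      ∀ β : ℝ, 0 ≤ β →
        Hren β (Real.cos (γ - θ) ^ 2) (Real.sin (γ - θ) ^ 2) ≤
          Hren β (Real.cos (γ + θ) ^ 2) (Real.sin (γ + θ) ^ 2)) ∧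
    (∀ θ ∈ Set.Icc (0 : ℝ) (Real.pi / 4), ∀ γ ∈ Set.Icc (0 : ℝ) (Real.pi / 4),
      ∀ β : ℝ, 0 ≤ β → β ≠ 1 →
        0 ≤ (Dfun β (γ - θ) - Dfun β (γ + θ)) / (β - 1)) := by
  have key : ∀ θ ∈ Set.Icc (0 : ℝ) (Real.pi / 4), ∀ γ ∈ Set.Icc (0 : ℝ) (Real.pi / 4),
      0 ≤ Real.sin (γ - θ) ^ 2 ∧
      Real.sin (γ - θ) ^ 2 ≤ min (Real.sin (γ + θ) ^ 2) (Real.cos (γ + θ) ^ 2) ∧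
      min (Real.sin (γ + θ) ^ 2) (Real.cos (γ + θ) ^ 2) ≤ 1 / 2 := by
    intro θ hθ γ hγ
    obtain ⟨hθ0, hθ1⟩ := hθ
    obtain ⟨hγ0, hγ1⟩ := hγ
    have hpi : (0:ℝ) < Real.pi := Real.pi_pos
    have hsin2γ : 0 ≤ Real.sin (2 * γ) :=
      Real.sin_nonneg_of_nonneg_of_le_pi (by linarith) (by linarith)
    have hsin2θ : 0 ≤ Real.sin (2 * θ) :=
      Real.sin_nonneg_of_nonneg_of_le_pi (by linarith) (by linarith)
    have hcos2γ : 0 ≤ Real.cos (2 * γ) :=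
      Real.cos_nonneg_of_mem_Icc ⟨by linarith, by linarith⟩
    have hcos2θ : 0 ≤ Real.cos (2 * θ) :=
      Real.cos_nonneg_of_mem_Icc ⟨by linarith, by linarith⟩
    have id1 : Real.sin (γ + θ) ^ 2 - Real.sin (γ - θ) ^ 2
        = Real.sin (2 * γ) * Real.sin (2 * θ) := by
      rw [Real.sin_add, Real.sin_sub, Real.sin_two_mul, Real.sin_two_mul]
      ring
    have id2 : Real.cos (γ + θ) ^ 2 - Real.sin (γ - θ) ^ 2
        = Real.cos (2 * γ) * Real.cos (2 * θ) := by
      have h2γ : Real.cos (2 * γ) = Real.cos γ ^ 2 - Real.sin γ ^ 2 := Real.cos_two_mul' γ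
      have h2θ : Real.cos (2 * θ) = Real.cos θ ^ 2 - Real.sin θ ^ 2 := Real.cos_two_mul' θ
      rw [Real.cos_add, Real.sin_sub, h2γ, h2θ]
      have hγ2 := Real.sin_sq_add_cos_sq γ
      have hθ2 := Real.sin_sq_add_cos_sq θ
      nlinarith [hγ2, hθ2]
    have hmin : min (Real.sin (γ + θ) ^ 2) (Real.cos (γ + θ) ^ 2) ≤ 1 / 2 := by
      have h := Real.sin_sq_add_cos_sq (γ + θ)
      rcases le_total (Real.sin (γ + θ) ^ 2) (Real.cos (γ + θ) ^ 2) with hle | hle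
      · rw [min_eq_left hle]; linarith
      · rw [min_eq_right hle]; linarith
    refine ⟨sq_nonneg _, le_min ?_ ?_, hmin⟩
    · nlinarith [mul_nonneg hsin2γ hsin2θ]
    · nlinarith [mul_nonneg hcos2γ hcos2θ]
  constructor
  · intro θ hθ γ hγ β hβ
    obtain ⟨hs0, hst, ht2⟩ := key θ hθ γ hγ
    set s := Real.sin (γ - θ) ^ 2 with hsdef
    set t := min (Real.sin (γ + θ) ^ 2) (Real.cos (γ + θ) ^ 2) with htdef
    have hcb : Real.cos (γ - θ) ^ 2 = 1 - s := by
      have := Real.sin_sq_add_cos_sq (γ - θ); linarith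
    have hmain := hren_mono hβ hs0 hst ht2
    rw [hcb]
    rcases le_total (Real.sin (γ + θ) ^ 2) (Real.cos (γ + θ) ^ 2) with hle | hle
    · have ht : t = Real.sin (γ + θ) ^ 2 := min_eq_left hle
      have hct : Real.cos (γ + θ) ^ 2 = 1 - t := by
        have := Real.sin_sq_add_cos_sq (γ + θ); rw [ht]; linarith
      rw [hct, ← ht]; exact hmain
    · have ht : t = Real.cos (γ + θ) ^ 2 := min_eq_right hle
      have hst' : Real.sin (γ + θ) ^ 2 = 1 - t := by
        have := Real.sin_sq_add_cos_sq (γ + θ); rw [ht]; linarith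
      rw [hst', ← ht, hren_comm β t (1 - t)]; exact hmain
  · intro θ hθ γ hγ β hβ hβ1
    obtain ⟨hs0, hst, ht2⟩ := key θ hθ γ hγ
    set s := Real.sin (γ - θ) ^ 2 with hsdef
    set t := min (Real.sin (γ + θ) ^ 2) (Real.cos (γ + θ) ^ 2) with htdef
    have hcb : Real.cos (γ - θ) ^ 2 = 1 - s := by
      have := Real.sin_sq_add_cos_sq (γ - θ); linarith
    have hDb : Dfun β (γ - θ) = pw s β + pw (1 - s) β := by
      unfold Dfun; rw [hcb, add_comm]
    have hDa : Dfun β (γ + θ) = pw t β + pw (1 - t) β := by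
      unfold Dfun
      rcases le_total (Real.sin (γ + θ) ^ 2) (Real.cos (γ + θ) ^ 2) with hle | hle
      · have ht : t = Real.sin (γ + θ) ^ 2 := min_eq_left hle
        have hct : Real.cos (γ + θ) ^ 2 = 1 - t := by
          have := Real.sin_sq_add_cos_sq (γ + θ); rw [ht]; linarith
        rw [hct, ← ht, add_comm]
      · have ht : t = Real.cos (γ + θ) ^ 2 := min_eq_right hle
        have hst' : Real.sin (γ + θ) ^ 2 = 1 - t := by
          have := Real.sin_sq_add_cos_sq (γ + θ); rw [ht]; linarith
        rw [hst', ← ht]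
    rw [hDb, hDa]
    rcases lt_or_gt_of_ne hβ1 with hb | hb
    · have hg := gmono hβ hb.le hs0 hst ht2
      apply div_nonneg_of_nonpos
      · linarith
      · linarith
    · have hg := ganti hb.le hs0 hst ht2
      apply div_nonneg
      · linarith
      · linarith
end
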